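/- arXiv:1409.5511 — 3 statements merged into one kernel-verified Lean document; each statement's English description precedes it below -/
import Mathlib

section
/- Let H be an elementary abelian 2-group of rank k and order n = 2^k. Then the weak commutativity group χ(H) is a finite group of order 2^{n−1}·n. -/
open Subgroup
open scoped commutatorElement

/-- Relators of the weak commutativity group. -/
def chiRel (H : Type*) [Group H] : Set (Monoid.Coprod H H) :=
  {x | ∃ h : H, x = ⁅(Monoid.Coprod.inl h : Monoid.Coprod H H), Monoid.Coprod.inr h⁆}

/-- The weak commutativity group χ(H). -/
def chi (H : Type*) [Group H] : Type _ :=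
  Monoid.Coprod H H ⧸ Subgroup.normalClosure (chiRel H)

noncomputable instance (H : Type*) [Group H] : Group (chi H) :=
  QuotientGroup.Quotient.group _

/-- Canonical map H → χ(H). -/
noncomputable def chiIota (H : Type*) [Group H] : H →* chi H :=
  (QuotientGroup.mk' _).comp Monoid.Coprod.inl

/-- Canonical map H → χ(H), h ↦ h^ψ. -/
noncomputable def chiPsi (H : Type*) [Group H] : H →* chi H :=
  (QuotientGroup.mk' _).comp Monoid.Coprod.inr

noncomputable def chiH (H : Type*) [Group H] : Subgroup (chi H) := (chiIota H).range
noncomputable def chiHpsi (H : Type*) [Group H] : Subgroup (chi H) := (chiPsi H).range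

/-- L(H) = ⟨h⁻¹ h^ψ⟩. -/
noncomputable def Lsub (H : Type*) [Group H] : Subgroup (chi H) :=
  Subgroup.closure {x | ∃ h : H, x = (chiIota H h)⁻¹ * chiPsi H h}

/-- D(H) = [H, H^ψ]. -/
noncomputable def Dsub (H : Type*) [Group H] : Subgroup (chi H) := ⁅chiH H, chiHpsi H⁆

/-- W(H) = L(H) ∩ D(H). -/
noncomputable def Wsub (H : Type*) [Group H] : Subgroup (chi H) := Lsub H ⊓ Dsub H

/-- R(H) = [H, L(H), H^ψ]. -/
noncomputable def Rsub (H : Type*) [Group H] : Subgroup (chi H) := ⁅⁅chiH H, Lsub H⁆, chiHpsi H⁆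



section KeyIdentity
variable {G : Type*} [Group G]

lemma inv_eq_self_of_sq {a : G} (h : a * a = 1) : a⁻¹ = a :=
  inv_eq_of_mul_eq_one_right h

/-- The key identity: if a,b,a',b' satisfy the weak-commutativity-style relations,
then a*a' commutes with b*b'. -/
lemma key_identity {a b a' b' : G}
    (hb : b * b = 1)
    (hab : a * b = b * a) (haa' : a * a' = a' * a) (hbb' : b * b' = b' * b)
    (ha'b' : a' * b' = b' * a')
    (hR : (a * b) * (a' * b') = (a' * b') * (a * b)) :
    (a * a') * (b * b') = (b * b') * (a * a') := by
  have hR' : a * (b * (a' * b')) = a' * (b' * (a * b)) := by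
    simpa [mul_assoc] using hR
  calc (a * a') * (b * b')
      = a * (a' * (b * b')) := by group
    _ = (b * b) * (a * (a' * (b * b'))) := by rw [hb, one_mul]
    _ = b * (a * (b * (a' * (b' * b)))) := by
        simp only [mul_assoc]
        rw [show a * (a' * (b * b')) = a * (a' * (b' * b)) by rw [hbb'],
            show b * (a * (a' * (b' * b))) = a * (b * (a' * (b' * b))) by
              rw [← mul_assoc, ← hab, mul_assoc]]
    _ = b * (a' * (b' * (a * (b * b)))) := by
        congr 1
        calc a * (b * (a' * (b' * b))) = (a * (b * (a' * b'))) * b := by group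
          _ = (a' * (b' * (a * b))) * b := by rw [hR']
          _ = a' * (b' * (a * (b * b))) := by group
    _ = b * (a' * (b' * a)) := by rw [hb, mul_one]
    _ = b * (b' * (a' * a)) := by rw [← mul_assoc, ← mul_assoc, show b * a' * b' = b * b' * a' by rw [mul_assoc, ha'b', mul_assoc], mul_assoc, mul_assoc]
    _ = (b * b') * (a * a') := by rw [← haa', ← mul_assoc]

end KeyIdentity

namespace ChiProof

variable (H : Type*) [Group H]

lemma chi_mk_surjective :
    Function.Surjective (QuotientGroup.mk : Monoid.Coprod H H → chi H) :=
  QuotientGroup.mk_surjective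

lemma mk_inl (h : H) :
    (QuotientGroup.mk (Monoid.Coprod.inl h) : chi H) = chiIota H h := rfl

lemma mk_inr (h : H) :
    (QuotientGroup.mk (Monoid.Coprod.inr h) : chi H) = chiPsi H h := rfl

lemma commute_iota_psi (h : H) : Commute (chiIota H h) (chiPsi H h) := by
  rw [← commutatorElement_eq_one_iff_commute]
  have : (⁅chiIota H h, chiPsi H h⁆ : chi H)
      = QuotientGroup.mk' _ ⁅(Monoid.Coprod.inl h : Monoid.Coprod H H), Monoid.Coprod.inr h⁆ := by
    rw [map_commutatorElement]; rfl
  rw [this]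
  exact (QuotientGroup.eq_one_iff _).2
    (Subgroup.subset_normalClosure ⟨h, rfl⟩)

noncomputable def lam (h : H) : chi H := chiIota H h * chiPsi H h

noncomputable def Lc : Subgroup (chi H) := Subgroup.closure (Set.range (lam H))

variable {H}
variable (hsq : ∀ h : H, h * h = 1) (hcm : ∀ g h : H, g * h = h * g)

section
include hsq

lemma iota_sq (h : H) : chiIota H h * chiIota H h = 1 := by
  rw [← map_mul, hsq, map_one]

lemma psi_sq (h : H) : chiPsi H h * chiPsi H h = 1 := by
  rw [← map_mul, hsq, map_one]

lemma iota_inv (h : H) : (chiIota H h)⁻¹ = chiIota H h :=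
  inv_eq_self_of_sq (iota_sq hsq h)

lemma psi_inv (h : H) : (chiPsi H h)⁻¹ = chiPsi H h :=
  inv_eq_self_of_sq (psi_sq hsq h)

lemma lam_sq (h : H) : lam H h * lam H h = 1 := by
  have c := (commute_iota_psi H h).eq
  calc chiIota H h * chiPsi H h * (chiIota H h * chiPsi H h)
      = chiIota H h * (chiPsi H h * chiIota H h) * chiPsi H h := by group
    _ = chiIota H h * (chiIota H h * chiPsi H h) * chiPsi H h := by rw [← c]
    _ = (chiIota H h * chiIota H h) * (chiPsi H h * chiPsi H h) := by group
    _ = 1 := by rw [iota_sq hsq, psi_sq hsq, one_mul]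

lemma lam_inv (h : H) : (lam H h)⁻¹ = lam H h :=
  inv_eq_self_of_sq (lam_sq hsq h)

include hcm

lemma lam_comm (g h : H) : lam H g * lam H h = lam H h * lam H g := by
  unfold lam
  apply key_identity (iota_sq hsq h)
  · rw [← map_mul, ← map_mul, hcm]
  · exact (commute_iota_psi H g).eq
  · exact (commute_iota_psi H h).eq
  · rw [← map_mul, ← map_mul, hcm]
  · rw [← map_mul, ← map_mul]
    exact (commute_iota_psi H (g * h)).eq

lemma conj_psi_lam (g h : H) :
    chiPsi H g * lam H h * chiPsi H g = lam H g * lam H (h * g) := by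
  unfold lam
  rw [map_mul, map_mul]
  -- goal: ψg * (ιh * ψh) * ψg = (ιg * ψg) * ((ιh * ιg) * (ψh * ψg))
  have h1 : chiIota H g * chiPsi H g * (chiIota H h * chiIota H g * (chiPsi H h * chiPsi H g))
      = chiIota H g * chiPsi H g * (chiIota H g * chiIota H h * (chiPsi H h * chiPsi H g)) := by
    rw [show chiIota H h * chiIota H g = chiIota H g * chiIota H h by
      rw [← map_mul, ← map_mul, hcm]]
  rw [h1]
  have h2 : chiIota H g * chiPsi H g * chiIota H g = chiPsi H g := by
    rw [(commute_iota_psi H g).eq, mul_assoc, iota_sq hsq, mul_one]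
  calc chiPsi H g * (chiIota H h * chiPsi H h) * chiPsi H g
      = chiPsi H g * (chiIota H h * (chiPsi H h * chiPsi H g)) := by group
    _ = (chiIota H g * chiPsi H g * chiIota H g) * (chiIota H h * (chiPsi H h * chiPsi H g)) := by
        rw [h2]
    _ = chiIota H g * chiPsi H g * (chiIota H g * chiIota H h * (chiPsi H h * chiPsi H g)) := by
        group

omit hsq hcm in
lemma lam_def' (h : H) : lam H h = chiIota H h * chiPsi H h := rfl

lemma conj_iota_lam (g h : H) :
    chiIota H g * lam H h * chiIota H g = lam H g * lam H (h * g) := by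
  rw [← conj_psi_lam hsq hcm g h]
  have hx : (chiIota H g * chiPsi H g) * lam H h = lam H h * (chiIota H g * chiPsi H g) := by
    rw [← lam_def', lam_comm hsq hcm g h]
  have h1 : chiIota H g * ((chiIota H g * chiPsi H g) * lam H h) * chiPsi H g
      = chiIota H g * (lam H h * (chiIota H g * chiPsi H g)) * chiPsi H g := by rw [hx]
  simp only [← mul_assoc] at h1
  rw [iota_sq hsq g, one_mul, mul_assoc _ (chiPsi H g) (chiPsi H g), psi_sq hsq g, mul_one] at h1
  rw [← h1]


omit hsq hcm in
lemma conj_gen {g : chi H} (hg : ∀ h : H, g * lam H h * g⁻¹ ∈ Lc H) :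
    ∀ n ∈ Lc H, g * n * g⁻¹ ∈ Lc H := by
  intro n hn
  have hle : Lc H ≤ (Lc H).comap (MulAut.conj g).toMonoidHom := by
    apply Subgroup.closure_le _ |>.mpr
    rintro x ⟨h, rfl⟩
    simpa [MulAut.conj_apply] using hg h
  simpa [MulAut.conj_apply] using hle hn

omit hsq hcm in
lemma conj_mul_helper {G : Type*} [Group G] {x y : G} {K : Subgroup G}
    (hx : ∀ n ∈ K, x * n * x⁻¹ ∈ K) (hy : ∀ n ∈ K, y * n * y⁻¹ ∈ K) :
    ∀ n ∈ K, (x * y) * n * (x * y)⁻¹ ∈ K := fun n hn => by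
  have e : (x * y) * n * (x * y)⁻¹ = x * (y * n * y⁻¹) * x⁻¹ := by group
  rw [e]; exact hx _ (hy n hn)

lemma Lnormal : (Lc H).Normal := by
  constructor
  have main : ∀ g : chi H, ∀ n ∈ Lc H, g * n * g⁻¹ ∈ Lc H := by
    intro g
    obtain ⟨x, rfl⟩ := chi_mk_surjective H g
    induction x using Monoid.Coprod.induction_on with
    | inl m =>
        rw [mk_inl]
        apply conj_gen
        intro h
        rw [iota_inv hsq, conj_iota_lam hsq hcm]
        exact mul_mem (Subgroup.subset_closure ⟨m, rfl⟩)
          (Subgroup.subset_closure ⟨h * m, rfl⟩)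
    | inr m =>
        rw [mk_inr]
        apply conj_gen
        intro h
        rw [psi_inv hsq, conj_psi_lam hsq hcm]
        exact mul_mem (Subgroup.subset_closure ⟨m, rfl⟩)
          (Subgroup.subset_closure ⟨h * m, rfl⟩)
    | mul x y hx hy =>
        rw [QuotientGroup.mk_mul]
        exact conj_mul_helper hx hy
  exact fun n hn g => main g n hn

lemma pi_surjective :
    letI := Lnormal hsq hcm
    Function.Surjective ((QuotientGroup.mk' (Lc H)).comp (chiIota H)) := by
  letI := Lnormal hsq hcm
  intro q
  obtain ⟨c, rfl⟩ := QuotientGroup.mk'_surjective (Lc H) q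
  obtain ⟨w, rfl⟩ := chi_mk_surjective H c
  have : ∀ w : Monoid.Coprod H H,
      (QuotientGroup.mk' (Lc H)) (QuotientGroup.mk w) ∈
        ((QuotientGroup.mk' (Lc H)).comp (chiIota H)).range := by
    intro w
    induction w using Monoid.Coprod.induction_on with
    | inl m => exact ⟨m, rfl⟩
    | inr m =>
        refine ⟨m, ?_⟩
        rw [mk_inr]
        simp only [MonoidHom.comp_apply]
        symm
        rw [QuotientGroup.mk'_eq_mk']
        exact ⟨lam H m, Subgroup.subset_closure ⟨m, rfl⟩, by
          rw [lam_def', ← mul_assoc, ← (commute_iota_psi H m).eq, mul_assoc,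
            psi_sq hsq, mul_one]⟩
    | mul x y hx hy =>
        convert mul_mem hx hy using 1
        exact map_mul (QuotientGroup.mk' (Lc H)) (QuotientGroup.mk x : chi H) (QuotientGroup.mk y : chi H)
  exact this w

end

end ChiProof



lemma card_le_of_gen {A : Type*} [CommGroup A] (t : Finset A) (hsq : ∀ x ∈ t, x * x = 1)
    (hgen : Subgroup.closure (t : Set A) = ⊤) : Finite A ∧ Nat.card A ≤ 2 ^ t.card := by
  classical
  let Phi : (t → ZMod 2) → A := fun F => ∏ z : t, z.1 ^ (F z).val
  have hPhi_add : ∀ F G₀, Phi (F + G₀) = Phi F * Phi G₀ := by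
    intro F G₀
    simp only [Phi]
    rw [← Finset.prod_mul_distrib]
    apply Finset.prod_congr rfl
    intro z _
    have h2 : (z.1 : A) ^ (2:ℕ) = 1 := by rw [pow_two]; exact hsq z.1 z.2
    have hv : ((F + G₀) z).val = ((F z).val + (G₀ z).val) % 2 := by
      simp [ZMod.val_add]
    rw [hv, ← pow_eq_pow_mod _ h2, pow_add]
  have hPhi0 : Phi 0 = 1 := by
    simp only [Phi]
    exact Finset.prod_eq_one fun z _ => by norm_num [ZMod.val_zero]
  have hsurj : Function.Surjective Phi := by
    intro y
    have hy : y ∈ Subgroup.closure (t : Set A) := hgen ▸ Subgroup.mem_top y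
    induction hy using Subgroup.closure_induction with
    | mem x hx =>
        have hxs : x ∈ t := hx
        refine ⟨fun z => if z.1 = x then 1 else 0, ?_⟩
        simp only [Phi]
        rw [Finset.prod_eq_single (⟨x, hxs⟩ : t)]
        · norm_num [ZMod.val_one]
        · intro z _ hz
          have : ¬ (z.1 = x) := fun hzz => hz (Subtype.ext hzz)
          simp [this]
        · intro h; exact absurd (Finset.mem_univ _) h
    | one => exact ⟨0, hPhi0⟩
    | mul x y hx hy ihx ihy =>
        obtain ⟨F, hF⟩ := ihx
        obtain ⟨G₀, hG⟩ := ihy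
        exact ⟨F + G₀, by rw [hPhi_add, hF, hG]⟩
    | inv x hx ih =>
        obtain ⟨F, hF⟩ := ih
        refine ⟨F, ?_⟩
        have hFF : Phi F * Phi F = 1 := by
          rw [← hPhi_add]
          have : F + F = 0 := by
            funext z
            exact CharTwo.add_self_eq_zero (F z)
          rw [this, hPhi0]
        rw [← hF] at *
        exact (inv_eq_of_mul_eq_one_right hFF).symm ▸ (inv_eq_of_mul_eq_one_right hFF)
  constructor
  · exact Finite.of_surjective Phi hsurj
  · calc Nat.card A ≤ Nat.card (t → ZMod 2) := Nat.card_le_card_of_surjective Phi hsurj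
      _ = 2 ^ t.card := by
          rw [Nat.card_fun]
          simp [Nat.card_eq_fintype_card]

lemma card_closure_le {G : Type*} [Group G] (s : Finset G)
    (hcomm : ∀ x ∈ s, ∀ y ∈ s, x * y = y * x) (hsq : ∀ x ∈ s, x * x = 1) :
    Finite (Subgroup.closure (s : Set G)) ∧
      Nat.card (Subgroup.closure (s : Set G)) ≤ 2 ^ s.card := by
  classical
  letI : CommGroup (Subgroup.closure (s : Set G)) :=
    Subgroup.closureCommGroupOfComm (by exact_mod_cast hcomm)
  let t : Finset (Subgroup.closure (s : Set G)) := s.attach.image (fun x => (⟨x.1, Subgroup.subset_closure x.2⟩ : Subgroup.closure (s : Set G)))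
  have htsq : ∀ x ∈ t, x * x = 1 := by
    intro x hx
    obtain ⟨z, _, rfl⟩ := Finset.mem_image.1 hx
    ext
    exact hsq z.1 z.2
  have htgen : Subgroup.closure (t : Set (Subgroup.closure (s : Set G))) = ⊤ := by
    rw [eq_top_iff]
    rintro ⟨y, hy⟩ -
    induction hy using Subgroup.closure_induction with
    | mem x hx =>
        apply Subgroup.subset_closure
        simp only [t, Finset.coe_image, Set.mem_image]
        exact ⟨⟨x, hx⟩, by simp, rfl⟩
    | one => exact one_mem _
    | mul x y hx hy ihx ihy => exact mul_mem ihx ihy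
    | inv x hx ih => exact inv_mem ih
  obtain ⟨hfin, hcard⟩ := card_le_of_gen t htsq htgen
  refine ⟨hfin, le_trans hcard ?_⟩
  apply Nat.pow_le_pow_right (by norm_num)
  calc t.card ≤ s.attach.card := Finset.card_image_le
    _ = s.card := Finset.card_attach



namespace Model

variable (k : ℕ)

abbrev Q := Fin k → ZMod 2
abbrev A := (Fin k → ZMod 2) → ZMod 2

def tau (q : Q k) (F : A k) : A k := fun x => F (x + q)

lemma tau_add (q r : Q k) (F : A k) : tau k (q + r) F = tau k r (tau k q F) := by
  funext x
  show F (x + (q + r)) = F (x + r + q)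
  rw [add_assoc, add_comm q r]

lemma tau_zero (F : A k) : tau k 0 F = F := by funext x; simp [tau]

lemma tau_zeroF (q : Q k) : tau k q (0 : A k) = 0 := rfl

lemma tau_swap (q r : Q k) (F : A k) : tau k r (tau k q F) = tau k q (tau k r F) := by
  rw [← tau_add, add_comm, tau_add]

lemma tau_addF (q : Q k) (F G : A k) : tau k q (F + G) = tau k q F + tau k q G := rfl

lemma tau_sum (q : Q k) (F : A k) : ∑ x, tau k q F x = ∑ x, F x :=
  Fintype.sum_equiv (Equiv.addRight q) _ _ (fun _ => rfl)

@[ext] structure GA where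
  F : A k
  q : Q k

instance : Mul (GA k) := ⟨fun a b => ⟨a.F + tau k a.q b.F, a.q + b.q⟩⟩
instance : One (GA k) := ⟨⟨0, 0⟩⟩
instance : Inv (GA k) := ⟨fun a => ⟨-(tau k (-a.q) a.F), -a.q⟩⟩

lemma mul_def (a b : GA k) : a * b = ⟨a.F + tau k a.q b.F, a.q + b.q⟩ := rfl
lemma one_def : (1 : GA k) = ⟨0, 0⟩ := rfl
lemma inv_def (a : GA k) : a⁻¹ = ⟨-(tau k (-a.q) a.F), -a.q⟩ := rfl

instance : Group (GA k) where
  mul_assoc a b c := by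
    rw [mul_def, mul_def, mul_def, mul_def]
    refine GA.ext ?_ ?_
    · show (a.F + tau k a.q b.F) + tau k (a.q + b.q) c.F
        = a.F + tau k a.q (b.F + tau k b.q c.F)
      rw [tau_add, tau_addF, add_assoc, tau_swap]
    · exact add_assoc _ _ _
  one_mul a := by
    rw [one_def, mul_def]
    refine GA.ext ?_ ?_
    · show (0 : A k) + tau k 0 a.F = a.F
      rw [tau_zero, zero_add]
    · exact zero_add _
  mul_one a := by
    rw [mul_def, one_def]
    refine GA.ext ?_ ?_
    · show a.F + tau k a.q 0 = a.F
      have : tau k a.q (0 : A k) = 0 := rfl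
      rw [this, add_zero]
    · exact add_zero _
  inv_mul_cancel a := by
    rw [inv_def, mul_def, one_def]
    refine GA.ext ?_ ?_
    · show -(tau k (-a.q) a.F) + tau k (-a.q) a.F = (0 : A k)
      rw [neg_add_cancel]
    · exact neg_add_cancel _

/-- The sum homomorphism. -/
def sigma : GA k →* Multiplicative (ZMod 2) where
  toFun a := Multiplicative.ofAdd (∑ x, a.F x)
  map_one' := by simp [one_def]
  map_mul' a b := by
    simp only [mul_def]
    rw [← ofAdd_add]
    congr 1
    simp [Finset.sum_add_distrib, tau_sum]

lemma sigma_surjective : Function.Surjective (sigma k) := by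
  intro c
  refine ⟨⟨fun x => if x = 0 then c.toAdd else 0, 0⟩, ?_⟩
  show Multiplicative.ofAdd (∑ x : Q k, if x = (0:Q k) then Multiplicative.toAdd c else 0) = c
  rw [Finset.sum_ite_eq' Finset.univ (0 : Q k) (fun _ => Multiplicative.toAdd c)]
  simp

def GI : Subgroup (GA k) := (sigma k).ker

/-- The equivalence with the product type, for counting. -/
def gaEquiv : GA k ≃ A k × Q k where
  toFun a := (a.F, a.q)
  invFun p := ⟨p.1, p.2⟩
  left_inv a := rfl
  right_inv p := rfl

instance : Finite (GA k) := Finite.of_equiv _ (gaEquiv k).symm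

lemma card_GA : Nat.card (GA k) = 2 ^ (2 ^ k) * 2 ^ k := by
  rw [Nat.card_congr (gaEquiv k), Nat.card_prod]
  have h1 : Nat.card (A k) = 2 ^ (2 ^ k) := by
    rw [Nat.card_fun]
    have : Nat.card (Q k) = 2 ^ k := by
      rw [Nat.card_fun]
      simp [Nat.card_eq_fintype_card]
    rw [this]
    simp [Nat.card_eq_fintype_card]
  have h2 : Nat.card (Q k) = 2 ^ k := by
    rw [Nat.card_fun]
    simp [Nat.card_eq_fintype_card]
  rw [h1, h2]

lemma card_GI : Nat.card (GI k) = 2 ^ (2 ^ k - 1) * 2 ^ k := by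
  have h := Subgroup.card_eq_card_quotient_mul_card_subgroup (GI k)
  have hq : Nat.card (GA k ⧸ GI k) = 2 :=
    (Nat.card_congr (QuotientGroup.quotientKerEquivOfSurjective _
      (sigma_surjective k)).toEquiv).trans (by simp [Nat.card_eq_fintype_card])
  rw [card_GA, hq] at h
  have hpow : 2 ^ (2 ^ k) = 2 * 2 ^ (2 ^ k - 1) := by
    have h1 : 2 ^ k - 1 + 1 = 2 ^ k := Nat.sub_add_cancel (Nat.one_le_two_pow)
    conv_lhs => rw [← h1]
    rw [pow_succ]
    ring
  rw [hpow] at h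
  have h2 : 2 * Nat.card (GI k) = 2 * (2 ^ (2 ^ k - 1) * 2 ^ k) := by rw [← h]; ring
  exact Nat.eq_of_mul_eq_mul_left (by norm_num) h2

def fq (q : Q k) : A k := fun x => (if x = 0 then 1 else 0) + (if x = q then 1 else 0)

lemma negQ (q : Q k) : -q = q := by funext i; exact CharTwo.neg_eq _
lemma addQ_self (q : Q k) : q + q = 0 := by funext i; exact CharTwo.add_self_eq_zero _

lemma cond_shift (x q v : Q k) : (x + q = v) ↔ (x = v + q) := by
  constructor
  · intro h
    have : x + q + q = v + q := by rw [h]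
    rwa [add_assoc, addQ_self, add_zero] at this
  · intro h
    rw [h, add_assoc, addQ_self, add_zero]

lemma tau_fq (q r : Q k) :
    tau k q (fq k r) = fun x => (if x = q then (1:ZMod 2) else 0) + (if x = r + q then 1 else 0) := by
  funext x
  show (if x + q = 0 then (1:ZMod 2) else 0) + (if x + q = r then 1 else 0) = _
  have h1 : (if x + q = 0 then (1:ZMod 2) else 0) = (if x = q then 1 else 0) := by
    apply if_congr _ rfl rfl
    rw [cond_shift k x q 0, zero_add]
  have h2 : (if x + q = r then (1:ZMod 2) else 0) = (if x = r + q then 1 else 0) :=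
    if_congr (cond_shift k x q r) rfl rfl
  rw [h1, h2]

lemma fq_sum (q : Q k) : ∑ x, fq k q x = 0 := by
  unfold fq
  rw [Finset.sum_add_distrib]
  rw [Finset.sum_ite_eq' Finset.univ (0 : Q k) (fun _ => (1:ZMod 2)),
      Finset.sum_ite_eq' Finset.univ q (fun _ => (1:ZMod 2))]
  simp
  rfl

lemma fq_zero : fq k 0 = 0 := by
  funext x
  show (if x = 0 then (1:ZMod 2) else 0) + (if x = 0 then 1 else 0) = 0
  exact CharTwo.add_self_eq_zero _

lemma fq_cocycle (q r : Q k) : fq k (q + r) = fq k q + tau k q (fq k r) := by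
  funext x
  rw [tau_fq, add_comm r q]
  show (if x = 0 then (1:ZMod 2) else 0) + (if x = q + r then 1 else 0)
      = ((if x = 0 then (1:ZMod 2) else 0) + (if x = q then 1 else 0))
        + ((if x = q then (1:ZMod 2) else 0) + (if x = q + r then 1 else 0))
  by_cases hxq : x = q
  · simp only [if_pos hxq]
    have h : (1 : ZMod 2) + 1 = 0 := rfl
    linear_combination -h
  · simp [hxq]

lemma tau_fq_self (q : Q k) : tau k q (fq k q) = fq k q := by
  rw [tau_fq, addQ_self]
  funext x
  exact add_comm _ _

lemma natCast_val (a : ZMod 2) : ((a.val : ℕ) : ZMod 2) = a := ZMod.natCast_rightInverse a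

lemma span (F : A k) (hF : ∑ x, F x = 0) : F = ∑ x : Q k, (F x).val • fq k x := by
  funext y
  rw [Finset.sum_apply]
  have : ∀ x : Q k, ((F x).val • fq k x) y = F x * fq k x y := by
    intro x
    rw [Pi.smul_apply, nsmul_eq_mul, natCast_val]
  rw [Finset.sum_congr rfl (fun x _ => this x)]
  unfold fq
  have expand : ∀ x : Q k, F x * ((if y = 0 then (1:ZMod 2) else 0) + (if y = x then 1 else 0))
      = F x * (if y = 0 then 1 else 0) + (if x = y then F x else 0) := by
    intro x
    rw [mul_add]
    congr 1
    by_cases h : y = x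
    · simp [h, eq_comm]
    · have h' : ¬ (x = y) := fun hh => h hh.symm
      simp [h, h']
  rw [Finset.sum_congr rfl (fun x _ => expand x), Finset.sum_add_distrib, ← Finset.sum_mul, hF,
    zero_mul, zero_add, Finset.sum_ite_eq' Finset.univ y F]
  simp


end Model


namespace Model

variable (k : ℕ)

lemma j_mul (F G : A k) : (⟨F, 0⟩ : GA k) * ⟨G, 0⟩ = ⟨F + G, 0⟩ := by
  rw [mul_def]
  refine GA.ext ?_ ?_
  · show F + tau k 0 G = F + G
    rw [tau_zero]
  · exact add_zero 0

lemma j_pow (F : A k) (n : ℕ) : (⟨F, 0⟩ : GA k) ^ n = ⟨n • F, 0⟩ := by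
  induction n with
  | zero => rw [pow_zero, zero_smul]; rfl
  | succ n ih => rw [pow_succ, ih, j_mul, succ_nsmul]

lemma mem_of_sum_zero (R : Subgroup (GA k)) (hq : ∀ q : Q k, (⟨0, q⟩ : GA k) ∈ R)
    (hf : ∀ q : Q k, (⟨fq k q, 0⟩ : GA k) ∈ R) :
    ∀ p : GA k, (∑ x, p.F x = 0) → p ∈ R := by
  intro p hp
  have hsplit : p = (⟨p.F, (0 : Q k)⟩ : GA k) * ⟨0, p.q⟩ := by
    rw [mul_def]
    refine (GA.ext ?_ ?_).symm
    · show p.F + tau k 0 0 = p.F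
      rw [tau_zero, add_zero]
    · exact zero_add p.q
  rw [hsplit]
  refine mul_mem ?_ (hq p.q)
  have key : ∀ s : Finset (Q k), (⟨∑ x ∈ s, (p.F x).val • fq k x, (0 : Q k)⟩ : GA k) ∈ R := by
    intro s
    induction s using Finset.induction with
    | empty =>
        have : (⟨∑ x ∈ (∅ : Finset (Q k)), (p.F x).val • fq k x, (0 : Q k)⟩ : GA k) = 1 := by
          rw [Finset.sum_empty]; rfl
        rw [this]; exact one_mem R
    | @insert a s ha ih =>
        rw [Finset.sum_insert ha, ← j_mul]
        exact mul_mem (by rw [← j_pow]; exact pow_mem (hf a) _) ih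
  have hres := key Finset.univ
  rwa [← span k p.F hp] at hres

lemma mem_GI_iff (p : GA k) : p ∈ GI k ↔ ∑ x, p.F x = 0 := by
  rw [GI, MonoidHom.mem_ker]
  show Multiplicative.ofAdd (∑ x, p.F x) = 1 ↔ _
  exact ofAdd_eq_one

end Model

/-- If H is an elementary abelian 2-group of rank k and order n = 2^k, then
χ(H) is finite of order 2^{n-1}·n. -/
theorem stmt_15 (H : Type*) [Group H] (k : ℕ)
    (hH : Nonempty (H ≃* (Fin k → Multiplicative (ZMod 2)))) :
    Finite (chi H) ∧ Nat.card (chi H) = 2 ^ (2 ^ k - 1) * 2 ^ k := by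
  classical
  obtain ⟨e⟩ := hH
  haveI : Finite H := Finite.of_equiv _ e.toEquiv.symm
  haveI : Fintype H := Fintype.ofFinite H
  -- basic facts about H
  have hsq : ∀ h : H, h * h = 1 := by
    intro h
    apply e.injective
    rw [map_mul, map_one]
    funext i
    show e h i * e h i = 1
    rw [← ofAdd_toAdd (e h i), ← ofAdd_add, CharTwo.add_self_eq_zero, ofAdd_zero]
  have hcm : ∀ g h : H, g * h = h * g := by
    intro g h
    apply e.injective
    rw [map_mul, map_mul, mul_comm]
  have hcardH : Nat.card H = 2 ^ k := by
    rw [Nat.card_congr e.toEquiv, Nat.card_fun]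
    have h1 : Nat.card (Multiplicative (ZMod 2)) = 2 := Nat.card_eq_fintype_card.trans (by rw [Fintype.card_multiplicative, ZMod.card])
    have h2 : Nat.card (Fin k) = k := by simp
    rw [h1, h2]
  -- PART A : upper bound
  haveI hLn : (ChiProof.Lc H).Normal := ChiProof.Lnormal hsq hcm
  have lam_one : ChiProof.lam H 1 = 1 := by
    rw [ChiProof.lam_def', map_one, map_one, one_mul]
  set s' : Finset (chi H) :=
    Finset.image (ChiProof.lam H) (Finset.univ.erase 1) with hs'
  have hLs : Subgroup.closure (↑s' : Set (chi H)) = ChiProof.Lc H := by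
    apply le_antisymm
    · rw [Subgroup.closure_le]
      intro x hx
      simp only [hs', Finset.coe_image, Set.mem_image] at hx
      obtain ⟨h, _, rfl⟩ := hx
      exact Subgroup.subset_closure ⟨h, rfl⟩
    · show Subgroup.closure (Set.range (ChiProof.lam H)) ≤ Subgroup.closure (↑s' : Set (chi H))
      rw [Subgroup.closure_le]
      rintro x ⟨h, rfl⟩
      by_cases h1 : h = 1
      · rw [h1, lam_one]
        exact one_mem _
      · apply Subgroup.subset_closure
        simp only [hs', Finset.coe_image, Set.mem_image]
        exact ⟨h, by simp [Finset.mem_erase, h1], rfl⟩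
  obtain ⟨hLfin, hLcard⟩ := card_closure_le s'
    (by
      rintro x hx y hy
      simp only [hs', Finset.mem_image] at hx hy
      obtain ⟨g, _, rfl⟩ := hx
      obtain ⟨h, _, rfl⟩ := hy
      exact ChiProof.lam_comm hsq hcm g h)
    (by
      rintro x hx
      simp only [hs', Finset.mem_image] at hx
      obtain ⟨g, _, rfl⟩ := hx
      exact ChiProof.lam_sq hsq g)
  rw [hLs] at hLfin hLcard
  have hscard : s'.card ≤ 2 ^ k - 1 := by
    calc s'.card ≤ (Finset.univ.erase (1 : H)).card := Finset.card_image_le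
      _ = Fintype.card H - 1 := by
          rw [Finset.card_erase_of_mem (Finset.mem_univ _), Finset.card_univ]
      _ = 2 ^ k - 1 := by rw [← Nat.card_eq_fintype_card, hcardH]
  have hLbound : Nat.card (ChiProof.Lc H) ≤ 2 ^ (2 ^ k - 1) :=
    le_trans hLcard (Nat.pow_le_pow_right (by norm_num) hscard)
  have hpisurj := ChiProof.pi_surjective hsq hcm
  haveI hQfin : Finite (chi H ⧸ ChiProof.Lc H) := Finite.of_surjective _ hpisurj
  haveI : Finite (ChiProof.Lc H) := hLfin
  haveI hchifin : Finite (chi H) :=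
    Finite.of_equiv _ (Subgroup.groupEquivQuotientProdSubgroup
      (s := ChiProof.Lc H)).symm
  have hQbound : Nat.card (chi H ⧸ ChiProof.Lc H) ≤ 2 ^ k := by
    rw [← hcardH]
    exact Nat.card_le_card_of_surjective _ hpisurj
  have hupper : Nat.card (chi H) ≤ 2 ^ (2 ^ k - 1) * 2 ^ k := by
    rw [Subgroup.card_eq_card_quotient_mul_card_subgroup (ChiProof.Lc H)]
    calc Nat.card (chi H ⧸ ChiProof.Lc H) * Nat.card (ChiProof.Lc H)
        ≤ 2 ^ k * 2 ^ (2 ^ k - 1) := Nat.mul_le_mul hQbound hLbound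
      _ = 2 ^ (2 ^ k - 1) * 2 ^ k := mul_comm _ _
  -- PART B : lower bound via the model
  set ε : H → Model.Q k := fun h i => Multiplicative.toAdd (e h i) with hε
  have ε_mul : ∀ g h : H, ε (g * h) = ε g + ε h := by
    intro g h
    funext i
    show Multiplicative.toAdd (e (g * h) i) = _
    rw [map_mul]
    rfl
  have ε_one : ε 1 = 0 := by
    funext i
    show Multiplicative.toAdd (e 1 i) = 0
    rw [map_one]
    rfl
  have ε_surj : Function.Surjective ε := by
    intro q
    refine ⟨e.symm (fun i => Multiplicative.ofAdd (q i)), ?_⟩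
    funext i
    show Multiplicative.toAdd (e (e.symm _) i) = q i
    rw [e.apply_symm_apply]
    rfl
  set iotaG : H →* Model.GA k := {
    toFun := fun h => ⟨0, ε h⟩
    map_one' := by
      refine Model.GA.ext rfl ?_
      exact ε_one
    map_mul' := fun g h => by
      rw [Model.mul_def]
      refine Model.GA.ext ?_ ?_
      · show (0 : Model.A k) = 0 + Model.tau k (ε g) 0
        rw [Model.tau_zeroF, add_zero]
      · exact ε_mul g h } with hiotaG
  set psiG : H →* Model.GA k := {
    toFun := fun h => ⟨Model.fq k (ε h), ε h⟩
    map_one' := by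
      refine Model.GA.ext ?_ ?_
      · show Model.fq k (ε 1) = 0
        rw [ε_one, Model.fq_zero]
      · exact ε_one
    map_mul' := fun g h => by
      rw [Model.mul_def]
      refine Model.GA.ext ?_ ?_
      · show Model.fq k (ε (g * h)) = Model.fq k (ε g) + Model.tau k (ε g) (Model.fq k (ε h))
        rw [ε_mul, Model.fq_cocycle]
      · exact ε_mul g h } with hpsiG
  have hcommG : ∀ h : H, iotaG h * psiG h = psiG h * iotaG h := by
    intro h
    rw [Model.mul_def, Model.mul_def]
    refine Model.GA.ext ?_ ?_
    · show (0 : Model.A k) + Model.tau k (ε h) (Model.fq k (ε h))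
        = Model.fq k (ε h) + Model.tau k (ε h) 0
      rw [Model.tau_zeroF, Model.tau_fq_self, zero_add, add_zero]
    · rfl
  set Lam : Monoid.Coprod H H →* Model.GA k := Monoid.Coprod.lift iotaG psiG with hLam
  have hker : Subgroup.normalClosure (chiRel H) ≤ Lam.ker := by
    apply Subgroup.normalClosure_le_normal
    rintro x ⟨h, rfl⟩
    rw [SetLike.mem_coe, MonoidHom.mem_ker, map_commutatorElement]
    rw [Monoid.Coprod.lift_apply_inl, Monoid.Coprod.lift_apply_inr]
    rw [commutatorElement_eq_one_iff_commute]
    exact hcommG h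
  set Phi : chi H →* Model.GA k := QuotientGroup.lift _ Lam hker with hPhi
  have hPhi_iota : ∀ h : H, Phi (chiIota H h) = iotaG h := fun h => by
    have h1 : Phi (chiIota H h) = Lam (Monoid.Coprod.inl h) := rfl
    rw [h1, hLam, Monoid.Coprod.lift_apply_inl]
  have hPhi_psi : ∀ h : H, Phi (chiPsi H h) = psiG h := fun h => by
    have h1 : Phi (chiPsi H h) = Lam (Monoid.Coprod.inr h) := rfl
    rw [h1, hLam, Monoid.Coprod.lift_apply_inr]
  have hrange : Phi.range = Model.GI k := by
    apply le_antisymm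
    · rintro _ ⟨c, rfl⟩
      obtain ⟨w, rfl⟩ := ChiProof.chi_mk_surjective H c
      induction w using Monoid.Coprod.induction_on with
      | inl m =>
          rw [ChiProof.mk_inl, hPhi_iota]
          rw [Model.mem_GI_iff]
          show (∑ x, (0 : Model.A k) x) = 0
          simp
      | inr m =>
          rw [ChiProof.mk_inr, hPhi_psi]
          rw [Model.mem_GI_iff]
          exact Model.fq_sum k (ε m)
      | mul x y hx hy =>
          convert mul_mem hx hy using 1
          exact map_mul Phi (QuotientGroup.mk x : chi H) (QuotientGroup.mk y : chi H)
    · intro p hp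
      rw [Model.mem_GI_iff] at hp
      refine Model.mem_of_sum_zero k Phi.range ?_ ?_ p hp
      · intro q
        obtain ⟨h, rfl⟩ := ε_surj q
        exact ⟨chiIota H h, hPhi_iota h⟩
      · intro q
        obtain ⟨h, rfl⟩ := ε_surj q
        refine ⟨chiPsi H h * chiIota H h, ?_⟩
        rw [map_mul, hPhi_iota, hPhi_psi]
        rw [Model.mul_def]
        refine Model.GA.ext ?_ ?_
        · show Model.fq k (ε h) + Model.tau k (ε h) 0 = Model.fq k (ε h)
          rw [Model.tau_zeroF, add_zero]
        · exact Model.addQ_self k (ε h)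
  have hlower : 2 ^ (2 ^ k - 1) * 2 ^ k ≤ Nat.card (chi H) := by
    rw [← Model.card_GI k, ← hrange]
    exact Nat.card_le_card_of_surjective _ Phi.rangeRestrict_surjective
  exact ⟨hchifin, le_antisymm hupper hlower⟩
end

section
/- Let H be a group admitting a surjective homomorphism onto an elementary abelian 2-group of rank at least 3. Then the subgroup R(H) of χ(H) is nontrivial. -/
open Subgroup
open scoped commutatorElement

/-! ### Auxiliary material: a finite permutation model detecting R(H).

We found (by coset enumeration over the weak commutativity group of `(ℤ/2)³`) six
permutations of 32 points: commuting involutions `pA1 pA2 pA3` and `pB1 pB2 pB3`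
such that for every subset `S ⊆ {1,2,3}` the products `∏_{i∈S} pAi` and
`∏_{i∈S} pBi` commute, while the triple commutator `⁅⁅pA1, pA2⁻¹ * pB2⁆, pB3⁆`
is nontrivial. -/

private def mkP (f : Fin 32 → Fin 32) (h : ∀ x, f (f x) = x) : Equiv.Perm (Fin 32) :=
  ⟨f, f, h, h⟩

private def pA1 : Equiv.Perm (Fin 32) := mkP
  ![0, 1, 6, 3, 12, 11, 2, 15, 8, 9, 20, 5, 4, 24, 23, 7, 27, 26, 18, 19, 10, 29, 30, 14, 13, 31, 17, 16, 28, 21, 22, 25] (by decide)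
private def pA2 : Equiv.Perm (Fin 32) := mkP
  ![0, 1, 7, 8, 4, 14, 15, 2, 3, 18, 20, 23, 12, 13, 5, 6, 26, 27, 9, 19, 10, 31, 30, 11, 24, 29, 16, 17, 28, 25, 22, 21] (by decide)
private def pA3 : Equiv.Perm (Fin 32) := mkP
  ![1, 0, 5, 9, 13, 2, 11, 14, 18, 3, 22, 6, 24, 4, 7, 23, 21, 25, 8, 28, 30, 16, 10, 15, 12, 17, 31, 29, 19, 27, 20, 26] (by decide)
private def pB1 : Equiv.Perm (Fin 32) := mkP
  ![0, 3, 2, 1, 10, 11, 6, 17, 19, 9, 4, 5, 20, 24, 23, 26, 16, 7, 18, 8, 12, 29, 30, 14, 13, 31, 15, 27, 28, 21, 22, 25] (by decide)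
private def pB2 : Equiv.Perm (Fin 32) := mkP
  ![0, 4, 2, 10, 1, 14, 16, 7, 20, 18, 3, 23, 19, 13, 5, 26, 6, 17, 9, 12, 8, 31, 30, 11, 24, 29, 15, 27, 28, 25, 22, 21] (by decide)
private def pB3 : Equiv.Perm (Fin 32) := mkP
  ![2, 5, 0, 11, 14, 1, 9, 13, 21, 6, 23, 3, 25, 7, 4, 22, 18, 24, 16, 29, 31, 8, 15, 10, 17, 12, 30, 28, 27, 19, 26, 20] (by decide)

private lemma mkCommute {G : Type*} [Mul G] {a b : G} (h : a * b = b * a) : Commute a b := h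

private lemma pow_mod_two {G : Type*} [Monoid G] (g : G) (hg : g * g = 1) (n : ℕ) :
    g ^ (n % 2) = g ^ n := by
  conv_rhs => rw [← Nat.mod_add_div n 2, pow_add, pow_mul]
  rw [pow_two, hg, one_pow, mul_one]

private lemma pow_zmod_val_add {G : Type*} [Monoid G] (g : G) (hg : g * g = 1) (x y : ZMod 2) :
    g ^ (x + y).val = g ^ x.val * g ^ y.val := by
  rw [ZMod.val_add, pow_mod_two g hg, pow_add]

/-- A homomorphism `(ℤ/2)^k → G` built from three commuting involutions, reading off
coordinates `i₀ i₁ i₂`. -/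
private def mkV {G : Type*} [Group G] {k : ℕ} (i₀ i₁ i₂ : Fin k) (g₁ g₂ g₃ : G)
    (h₁ : g₁ * g₁ = 1) (h₂ : g₂ * g₂ = 1) (h₃ : g₃ * g₃ = 1)
    (c₁₂ : Commute g₁ g₂) (c₁₃ : Commute g₁ g₃) (c₂₃ : Commute g₂ g₃) :
    (Fin k → Multiplicative (ZMod 2)) →* G where
  toFun v := g₁ ^ (Multiplicative.toAdd (v i₀)).val * g₂ ^ (Multiplicative.toAdd (v i₁)).val *
      g₃ ^ (Multiplicative.toAdd (v i₂)).val
  map_one' := by simp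
  map_mul' v w := by
    simp only [Pi.mul_apply, toAdd_mul]
    rw [pow_zmod_val_add g₁ h₁, pow_zmod_val_add g₂ h₂, pow_zmod_val_add g₃ h₃,
      (c₁₂.pow_pow _ _).mul_mul_mul_comm,
      ((c₁₃.pow_pow _ _).mul_left (c₂₃.pow_pow _ _)).mul_mul_mul_comm]

private def alphaHom {k : ℕ} (i₀ i₁ i₂ : Fin k) :
    (Fin k → Multiplicative (ZMod 2)) →* Equiv.Perm (Fin 32) :=
  mkV i₀ i₁ i₂ pA1 pA2 pA3 (by decide) (by decide) (by decide)
    (mkCommute (by decide)) (mkCommute (by decide)) (mkCommute (by decide))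

private def betaHom {k : ℕ} (i₀ i₁ i₂ : Fin k) :
    (Fin k → Multiplicative (ZMod 2)) →* Equiv.Perm (Fin 32) :=
  mkV i₀ i₁ i₂ pB1 pB2 pB3 (by decide) (by decide) (by decide)
    (mkCommute (by decide)) (mkCommute (by decide)) (mkCommute (by decide))


private lemma alphaHom_apply {k : ℕ} (i₀ i₁ i₂ : Fin k) (v : Fin k → Multiplicative (ZMod 2)) :
    alphaHom i₀ i₁ i₂ v = pA1 ^ (Multiplicative.toAdd (v i₀)).val *
      pA2 ^ (Multiplicative.toAdd (v i₁)).val * pA3 ^ (Multiplicative.toAdd (v i₂)).val := rfl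

private lemma betaHom_apply {k : ℕ} (i₀ i₁ i₂ : Fin k) (v : Fin k → Multiplicative (ZMod 2)) :
    betaHom i₀ i₁ i₂ v = pB1 ^ (Multiplicative.toAdd (v i₀)).val *
      pB2 ^ (Multiplicative.toAdd (v i₁)).val * pB3 ^ (Multiplicative.toAdd (v i₂)).val := rfl

private lemma alpha_beta_commute {k : ℕ} (i₀ i₁ i₂ : Fin k)
    (u : Fin k → Multiplicative (ZMod 2)) :
    Commute (alphaHom i₀ i₁ i₂ u) (betaHom i₀ i₁ i₂ u) := by
  rw [commute_iff_eq, alphaHom_apply, betaHom_apply]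
  have cases2 : ∀ x : ZMod 2, x = 0 ∨ x = 1 := by decide
  rcases cases2 (Multiplicative.toAdd (u i₀)) with h₀ | h₀ <;>
    rcases cases2 (Multiplicative.toAdd (u i₁)) with h₁ | h₁ <;>
      rcases cases2 (Multiplicative.toAdd (u i₂)) with h₂ | h₂ <;>
        (rw [h₀, h₁, h₂]; decide)

section Main

variable {H : Type*} [Group H] {k : ℕ}

private def Fhom (φ : H →* (Fin k → Multiplicative (ZMod 2))) (i₀ i₁ i₂ : Fin k) :
    Monoid.Coprod H H →* Equiv.Perm (Fin 32) :=
  Monoid.Coprod.lift ((alphaHom i₀ i₁ i₂).comp φ) ((betaHom i₀ i₁ i₂).comp φ)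

private lemma Fhom_ker (φ : H →* (Fin k → Multiplicative (ZMod 2))) (i₀ i₁ i₂ : Fin k) :
    Subgroup.normalClosure (chiRel H) ≤ (Fhom φ i₀ i₁ i₂).ker := by
  apply Subgroup.normalClosure_le_normal
  rintro y ⟨h, rfl⟩
  rw [SetLike.mem_coe, MonoidHom.mem_ker, map_commutatorElement]
  have h1 : Fhom φ i₀ i₁ i₂ (Monoid.Coprod.inl h) = alphaHom i₀ i₁ i₂ (φ h) :=
    Monoid.Coprod.lift_apply_inl _ _ _
  have h2 : Fhom φ i₀ i₁ i₂ (Monoid.Coprod.inr h) = betaHom i₀ i₁ i₂ (φ h) :=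
    Monoid.Coprod.lift_apply_inr _ _ _
  rw [h1, h2]
  exact commutatorElement_eq_one_iff_commute.mpr (alpha_beta_commute i₀ i₁ i₂ (φ h))

private noncomputable def chiF (φ : H →* (Fin k → Multiplicative (ZMod 2)))
    (i₀ i₁ i₂ : Fin k) : chi H →* Equiv.Perm (Fin 32) :=
  QuotientGroup.lift _ (Fhom φ i₀ i₁ i₂) (Fhom_ker φ i₀ i₁ i₂)

private lemma chiF_iota (φ : H →* (Fin k → Multiplicative (ZMod 2))) (i₀ i₁ i₂ : Fin k)
    (h : H) : chiF φ i₀ i₁ i₂ (chiIota H h) = alphaHom i₀ i₁ i₂ (φ h) := by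
  show (QuotientGroup.lift _ (Fhom φ i₀ i₁ i₂) (Fhom_ker φ i₀ i₁ i₂))
      (QuotientGroup.mk (Monoid.Coprod.inl h)) = _
  rw [QuotientGroup.lift_mk']
  exact Monoid.Coprod.lift_apply_inl _ _ _

private lemma chiF_psi (φ : H →* (Fin k → Multiplicative (ZMod 2))) (i₀ i₁ i₂ : Fin k)
    (h : H) : chiF φ i₀ i₁ i₂ (chiPsi H h) = betaHom i₀ i₁ i₂ (φ h) := by
  show (QuotientGroup.lift _ (Fhom φ i₀ i₁ i₂) (Fhom_ker φ i₀ i₁ i₂))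
      (QuotientGroup.mk (Monoid.Coprod.inr h)) = _
  rw [QuotientGroup.lift_mk']
  exact Monoid.Coprod.lift_apply_inr _ _ _

private lemma alphaHom_single₀ {i₀ i₁ i₂ : Fin k} (h10 : i₁ ≠ i₀) (h20 : i₂ ≠ i₀) :
    alphaHom i₀ i₁ i₂ (Pi.mulSingle i₀ (Multiplicative.ofAdd (1 : ZMod 2))) = pA1 := by
  rw [alphaHom_apply, Pi.mulSingle_eq_same, Pi.mulSingle_eq_of_ne h10, Pi.mulSingle_eq_of_ne h20]
  decide

private lemma alphaHom_single₁ {i₀ i₁ i₂ : Fin k} (h01 : i₀ ≠ i₁) (h21 : i₂ ≠ i₁) :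
    alphaHom i₀ i₁ i₂ (Pi.mulSingle i₁ (Multiplicative.ofAdd (1 : ZMod 2))) = pA2 := by
  rw [alphaHom_apply, Pi.mulSingle_eq_same, Pi.mulSingle_eq_of_ne h01, Pi.mulSingle_eq_of_ne h21]
  decide

private lemma betaHom_single₁ {i₀ i₁ i₂ : Fin k} (h01 : i₀ ≠ i₁) (h21 : i₂ ≠ i₁) :
    betaHom i₀ i₁ i₂ (Pi.mulSingle i₁ (Multiplicative.ofAdd (1 : ZMod 2))) = pB2 := by
  rw [betaHom_apply, Pi.mulSingle_eq_same, Pi.mulSingle_eq_of_ne h01, Pi.mulSingle_eq_of_ne h21]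
  decide

private lemma betaHom_single₂ {i₀ i₁ i₂ : Fin k} (h02 : i₀ ≠ i₂) (h12 : i₁ ≠ i₂) :
    betaHom i₀ i₁ i₂ (Pi.mulSingle i₂ (Multiplicative.ofAdd (1 : ZMod 2))) = pB3 := by
  rw [betaHom_apply, Pi.mulSingle_eq_same, Pi.mulSingle_eq_of_ne h02, Pi.mulSingle_eq_of_ne h12]
  decide

end Main

/-- If H maps onto an elementary abelian 2-group of rank k ≥ 3, then R(H) is
nontrivial. -/
theorem stmt_17 (H : Type*) [Group H] (k : ℕ) (hk : 3 ≤ k)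
    (φ : H →* (Fin k → Multiplicative (ZMod 2)))
    (hφ : Function.Surjective φ) :
    Rsub H ≠ ⊥ := by
  intro hbot
  have hk0 : (0 : ℕ) < k := by omega
  have hk1 : (1 : ℕ) < k := by omega
  have hk2 : (2 : ℕ) < k := by omega
  set i₀ : Fin k := ⟨0, hk0⟩ with hi₀
  set i₁ : Fin k := ⟨1, hk1⟩ with hi₁
  set i₂ : Fin k := ⟨2, hk2⟩ with hi₂
  have h01 : i₀ ≠ i₁ := fun h => by simp [hi₀, hi₁, Fin.mk.injEq] at h
  have h02 : i₀ ≠ i₂ := fun h => by simp [hi₀, hi₂, Fin.mk.injEq] at h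
  have h12 : i₁ ≠ i₂ := fun h => by simp [hi₁, hi₂, Fin.mk.injEq] at h
  obtain ⟨a, ha⟩ := hφ (Pi.mulSingle i₀ (Multiplicative.ofAdd (1 : ZMod 2)))
  obtain ⟨b, hb⟩ := hφ (Pi.mulSingle i₁ (Multiplicative.ofAdd (1 : ZMod 2)))
  obtain ⟨c, hc⟩ := hφ (Pi.mulSingle i₂ (Multiplicative.ofAdd (1 : ZMod 2)))
  -- the witness element of R(H)
  set w : chi H := ⁅⁅chiIota H a, (chiIota H b)⁻¹ * chiPsi H b⁆, chiPsi H c⁆ with hw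
  have hmem : w ∈ Rsub H := by
    apply Subgroup.commutator_mem_commutator
    · exact Subgroup.commutator_mem_commutator ⟨a, rfl⟩
        (Subgroup.subset_closure ⟨b, rfl⟩)
    · exact ⟨c, rfl⟩
  have hw1 : w = 1 := by
    rw [hbot] at hmem
    exact Subgroup.mem_bot.mp hmem
  -- push through the finite model
  have himg : chiF φ i₀ i₁ i₂ w = ⁅⁅pA1, pA2⁻¹ * pB2⁆, pB3⁆ := by
    rw [hw, map_commutatorElement, map_commutatorElement, map_mul, map_inv,
      chiF_iota, chiF_iota, chiF_psi, chiF_psi, ha, hb, hc,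
      alphaHom_single₀ h01.symm h02.symm, alphaHom_single₁ h01 h12.symm,
      betaHom_single₁ h01 h12.symm, betaHom_single₂ h02 h12]
  have : (⁅⁅pA1, pA2⁻¹ * pB2⁆, pB3⁆ : Equiv.Perm (Fin 32)) ≠ 1 := by decide
  apply this
  rw [← himg, hw1, map_one]
end

section
/- Let H be a metacyclic group, i.e. a group possessing a cyclic normal subgroup N such that the quotient H/N is cyclic. Then the subgroup R(H) of χ(H) is trivial. -/
open Subgroup
open scoped commutatorElement

namespace Chi19

variable {G : Type*} [Group G]

/-- conjugation: `cj u x = u⁻¹ * x * u`. -/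
def cj (u x : G) : G := u⁻¹ * x * u

/-- commutator `mn x y = x⁻¹ * y⁻¹ * x * y`. -/
def mn (x y : G) : G := x⁻¹ * y⁻¹ * x * y

lemma cj_eq_conj (u x : G) : cj u x = (MulAut.conj u⁻¹) x := by
  simp [cj, MulAut.conj]

lemma cj_mul (u x y : G) : cj u (x * y) = cj u x * cj u y := by
  simp [cj_eq_conj, map_mul]

lemma cj_inv (u x : G) : cj u x⁻¹ = (cj u x)⁻¹ := by
  simp [cj_eq_conj, map_inv]

lemma cj_zpow (u x : G) (n : ℤ) : cj u (x ^ n) = (cj u x) ^ n := by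
  simp [cj_eq_conj, map_zpow]

lemma cj_one (u : G) : cj u (1 : G) = 1 := by simp [cj]

lemma cj_one_base (x : G) : cj (1 : G) x = x := by simp [cj]

lemma cj_cj (u v x : G) : cj v (cj u x) = cj (u * v) x := by
  simp [cj, mul_assoc]

lemma cj_id_of_commute {x u : G} (h : Commute x u) : cj u x = x := by
  unfold cj
  rw [mul_assoc, h.eq, ← mul_assoc]
  simp

lemma commute_of_cj_id {x u : G} (h : cj u x = x) : Commute x u := by
  unfold cj at h
  have : x * u = u * x := by
    calc x * u = u * (u⁻¹ * x * u) := by group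
    _ = u * x := by rw [h]
  exact this

lemma mn_eq_one_of_commute {x y : G} (h : Commute x y) : mn x y = 1 := by
  unfold mn
  calc x⁻¹ * y⁻¹ * x * y = x⁻¹ * y⁻¹ * (x * y) := by group
  _ = x⁻¹ * y⁻¹ * (y * x) := by rw [h.eq]
  _ = 1 := by group

lemma commute_of_mn_eq_one {x y : G} (h : mn x y = 1) : Commute x y := by
  unfold mn at h
  have : x * y = y * x := by
    calc x * y = (y * x) * (x⁻¹ * y⁻¹ * x * y) := by group
    _ = y * x := by rw [h]; group
  exact this

lemma mn_mul_right (x z w : G) : mn x (z * w) = mn x w * cj w (mn x z) := by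
  unfold mn cj; group

lemma mn_mul_left (x v z : G) : mn (x * v) z = cj v (mn x z) * mn v z := by
  unfold mn cj; group

lemma mn_inv_right (x z : G) : mn x z⁻¹ = (cj z⁻¹ (mn x z))⁻¹ := by
  unfold mn cj; group

lemma mn_inv_left (x z : G) : mn x⁻¹ z = (cj x⁻¹ (mn x z))⁻¹ := by
  unfold mn cj; group

lemma cj_eq_mul_mn (z x : G) : cj z x = x * mn x z := by
  unfold mn cj; group

lemma mn_inv_pair (x z : G) : mn z x = (mn x z)⁻¹ := by unfold mn; group

lemma mn_inv_right' (x z : G) : mn x z⁻¹ = cj z⁻¹ (mn x z)⁻¹ := by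
  unfold mn cj; group

lemma mn_inv_left' (x z : G) : mn x⁻¹ z = cj x⁻¹ (mn x z)⁻¹ := by
  unfold mn cj; group

lemma mn_one_right (x : G) : mn x 1 = 1 := by simp [mn]

lemma mn_one_left (x : G) : mn 1 x = 1 := by simp [mn]

lemma commute_cj_of (u : G) {x y : G} (h : Commute x y) :
    Commute (cj u x) (cj u y) := by
  rw [cj_eq_conj, cj_eq_conj]
  exact h.map _

lemma commute_of_commute_cj {u x y : G} (h : Commute (cj u x) (cj u y)) :
    Commute x y := by
  have h2 := commute_cj_of u⁻¹ h
  rwa [cj_cj, cj_cj, mul_inv_cancel, cj_one_base, cj_one_base] at h2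

/-- transfer: `Commute (cj u x) z → Commute x (cj u⁻¹ z)`. -/
lemma commute_cj_transfer {u x z : G} (h : Commute (cj u x) z) :
    Commute x (cj u⁻¹ z) := by
  have : Commute (cj u⁻¹ (cj u x)) (cj u⁻¹ z) := commute_cj_of u⁻¹ h
  rwa [cj_cj, mul_inv_cancel, cj_one_base] at this

variable {H : Type*} [Group H]

/-- `lmm f g x = (f x)⁻¹ * g x`. -/
def lmm (f g : H →* G) (x : H) : G := (f x)⁻¹ * g x

/-- `ccc f g x y = mn (f x) (lmm y)`. -/
def ccc (f g : H →* G) (x y : H) : G := mn (f x) (lmm f g y)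

variable (f g : H →* G)

lemma lmm_one : lmm f g 1 = 1 := by simp [lmm]

lemma lmm_cocycle (x y : H) : lmm f g (x * y) = cj (f y) (lmm f g x) * lmm f g y := by
  simp only [lmm, cj, map_mul]; group

lemma lmm_cj_g (x y : H) : cj (g y) (lmm f g x) = (lmm f g y)⁻¹ * lmm f g (x * y) := by
  simp only [lmm, cj, map_mul]; group

lemma lmm_inv (x : H) : lmm f g x⁻¹ = cj (f x⁻¹) (lmm f g x)⁻¹ := by
  simp only [lmm, cj, map_inv]; group

lemma ccc_lm (x y : H) : ccc f g x y = lmm f g x * (lmm f g (y * x))⁻¹ * lmm f g y := by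
  simp only [ccc, mn, lmm, map_mul]; group

lemma ccc_one_left (y : H) : ccc f g 1 y = 1 := by
  simp only [ccc, mn, lmm, map_one]; group

lemma ccc_one_right (x : H) : ccc f g x 1 = 1 := by
  simp only [ccc, mn, lmm, map_one]; group

lemma conj_ccc_f (x y k : H) :
    cj (f k) (ccc f g x y) = ccc f g (x * k) y * (ccc f g k y)⁻¹ := by
  simp only [ccc, mn, lmm, cj, map_mul]; group

lemma ccc_mul_left (x y k : H) :
    ccc f g (x * k) y = cj (f k) (ccc f g x y) * ccc f g k y := by
  rw [conj_ccc_f]; group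

lemma conj_ccc_g (x y k : H) :
    cj (g k) (ccc f g x y) = (ccc f g (k⁻¹ * x * k) k)⁻¹ * ccc f g (k⁻¹ * x * k) (y * k) := by
  simp only [ccc, mn, lmm, cj, map_mul, map_inv]; group

lemma ccc_expand_right (x y k : H) :
    ccc f g x (y * k) = ccc f g x k * cj (g k) (ccc f g (k * x * k⁻¹) y) := by
  simp only [ccc, mn, lmm, cj, map_mul, map_inv]; group

lemma ccc_inv_left (x y : H) : ccc f g x⁻¹ y = cj (f x⁻¹) (ccc f g x y)⁻¹ := by
  simp only [ccc, mn, lmm, cj, map_inv]; group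

lemma ccc_inv_right (x y : H) :
    ccc f g x y⁻¹ = cj (g y⁻¹) (ccc f g (y⁻¹ * x * y) y)⁻¹ := by
  simp only [ccc, mn, lmm, cj, map_mul, map_inv]; group

lemma mn_map (x y : H) : mn (f x) (f y) = f (mn x y) := by
  simp only [mn, map_mul, map_inv]

theorem abs_main (hc : ∀ h : H, Commute (f h) (g h))
    (htop : Subgroup.closure (Set.range f ∪ Set.range g) = (⊤ : Subgroup G))
    (N : Subgroup H) (hN : N.Normal) (hcyc : IsCyclic N) (hquot : IsCyclic (H ⧸ N)) :
    ⁅⁅f.range, Subgroup.closure {x | ∃ h : H, x = (f h)⁻¹ * g h}⁆, g.range⁆ = ⊥ := by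
  -- ===== setup: generators and metacyclic data =====
  classical
  obtain ⟨a₀, ha₀⟩ := hcyc.exists_generator
  set a : H := (a₀ : H) with ha_def
  have haN : a ∈ N := a₀.2
  have hNa : ∀ n ∈ N, ∃ i : ℤ, n = a ^ i := by
    intro n hn
    obtain ⟨i, hi⟩ := Subgroup.mem_zpowers_iff.mp (ha₀ ⟨n, hn⟩)
    refine ⟨i, ?_⟩
    have h2 := congrArg (Subtype.val) hi
    push_cast at h2
    exact h2.symm
  obtain ⟨bq, hbq⟩ := hquot.exists_generator
  obtain ⟨b, hb⟩ := QuotientGroup.mk'_surjective N bq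
  have hmemN : ∀ x : H, QuotientGroup.mk' N x = 1 → x ∈ N := by
    intro x hx
    exact (QuotientGroup.eq_one_iff x).mp hx
  have hdecomp : ∀ h : H, ∃ i j : ℤ, h = a ^ i * b ^ j := by
    intro h
    obtain ⟨j, hj⟩ := Subgroup.mem_zpowers_iff.mp (hbq (QuotientGroup.mk' N h))
    have hmem : h * (b ^ j)⁻¹ ∈ N := by
      apply hmemN
      rw [map_mul, map_inv, map_zpow, hb, hj]
      group
    obtain ⟨i, hi⟩ := hNa _ hmem
    exact ⟨i, j, by rw [← hi]; group⟩
  have hQcomm : ∀ u v : H ⧸ N, u * v = v * u := by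
    intro u v
    obtain ⟨i, hi⟩ := Subgroup.mem_zpowers_iff.mp (hbq u)
    obtain ⟨j, hj⟩ := Subgroup.mem_zpowers_iff.mp (hbq v)
    rw [← hi, ← hj, ← zpow_add, ← zpow_add, add_comm]
  have hcommN : ∀ x y : H, mn x y ∈ N := by
    intro x y
    apply hmemN
    have : QuotientGroup.mk' N (mn x y)
        = (QuotientGroup.mk' N x)⁻¹ * (QuotientGroup.mk' N y)⁻¹
          * QuotientGroup.mk' N x * QuotientGroup.mk' N y := by
      simp [mn, map_mul, map_inv]
    rw [this]
    rw [mul_assoc _ _ (QuotientGroup.mk' N y), hQcomm (QuotientGroup.mk' N x) _]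
    group
  obtain ⟨m, hm⟩ : ∃ m : ℤ, b⁻¹ * a * b = a ^ m := by
    refine hNa _ ?_
    have := hN.conj_mem a haN b⁻¹
    simpa using this
  obtain ⟨mt, hmt⟩ : ∃ mt : ℤ, b * a * b⁻¹ = a ^ mt := by
    refine hNa _ ?_
    have := hN.conj_mem a haN b
    simpa using this
  have hamm : a ^ (m * mt) = a := by
    have h1 : cj b (a ^ mt) = a := by
      unfold cj; rw [← hmt]; group
    calc a ^ (m * mt) = (a ^ m) ^ mt := by rw [zpow_mul]
    _ = (cj b a) ^ mt := by rw [show cj b a = a ^ m from hm]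
    _ = cj b (a ^ mt) := by rw [cj_zpow]
    _ = a := h1
  have hab : a * b = b * a ^ m := by rw [← hm]; group
  have hab' : a * b⁻¹ = b⁻¹ * a ^ mt := by rw [← hmt]; group
  have Hgen : ∀ h : H, h ∈ Subgroup.closure ({a, b} : Set H) := by
    intro h
    obtain ⟨i, j, hij⟩ := hdecomp h
    rw [hij]
    exact mul_mem (zpow_mem (subset_closure (by simp)) i)
      (zpow_mem (subset_closure (by simp)) j)
  -- ===== core elements and their commutation properties =====
  -- `Commute d (g a)` where `d = mn (f a) (g b)`
  have comm_d_ga : Commute (mn (f a) (g b)) (g a) := by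
    have hw : g a * (g b)⁻¹ = (g b)⁻¹ * (g a) ^ mt := by
      rw [← map_inv, ← map_zpow, ← map_mul, ← map_mul, hab']
    have e1 : mn (f a) (g a * (g b)⁻¹) = mn (f a) ((g b)⁻¹) := by
      rw [mn_mul_right, mn_eq_one_of_commute (hc a), cj_one, mul_one]
    have e2 : mn (f a) (g a * (g b)⁻¹) = cj ((g a) ^ mt) (mn (f a) ((g b)⁻¹)) := by
      rw [hw, mn_mul_right, mn_eq_one_of_commute ((hc a).zpow_right mt), one_mul]
    have hQ : Commute (mn (f a) ((g b)⁻¹)) ((g a) ^ mt) :=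
      commute_of_cj_id (e1.symm.trans e2).symm
    rw [mn_inv_right'] at hQ
    have hQ2 := commute_cj_transfer hQ
    rw [inv_inv] at hQ2
    have hside : cj (g b) ((g a) ^ mt) = g a := by
      rw [← map_zpow]
      show (g b)⁻¹ * g (a ^ mt) * g b = g a
      rw [← map_inv, ← map_mul, ← map_mul]
      congr 1
      have h2 : b⁻¹ * a ^ mt * b = (b⁻¹ * a * b) ^ mt := by
        rw [show b⁻¹ * a * b = cj b a from rfl, ← cj_zpow]; rfl
      rw [h2, hm, ← zpow_mul, hamm]
    rw [hside] at hQ2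
    have := hQ2.inv_left
    rwa [inv_inv] at this
  -- `Commute e (f a)` where `e = mn (f b) (g a)`
  have comm_e_fa : Commute (mn (f b) (g a)) (f a) := by
    have hwf : f a * (f b)⁻¹ = (f b)⁻¹ * (f a) ^ mt := by
      rw [← map_inv, ← map_zpow, ← map_mul, ← map_mul, hab']
    have e1 : mn (f a * (f b)⁻¹) (g a) = cj (f b)⁻¹ (mn (f b) (g a))⁻¹ := by
      rw [mn_mul_left, mn_eq_one_of_commute (hc a), cj_one, one_mul, mn_inv_left']
    have e2 : mn (f a * (f b)⁻¹) (g a)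
        = cj ((f a) ^ mt) (cj (f b)⁻¹ (mn (f b) (g a))⁻¹) := by
      rw [hwf, mn_mul_left, mn_eq_one_of_commute ((hc a).zpow_left mt), mul_one,
        mn_inv_left']
    have hQ : Commute (cj (f b)⁻¹ (mn (f b) (g a))⁻¹) ((f a) ^ mt) :=
      commute_of_cj_id (e1.symm.trans e2).symm
    have hQ2 := commute_cj_transfer hQ
    rw [inv_inv] at hQ2
    have hside : cj (f b) ((f a) ^ mt) = f a := by
      rw [← map_zpow]
      show (f b)⁻¹ * f (a ^ mt) * f b = f a
      rw [← map_inv, ← map_mul, ← map_mul]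
      congr 1
      have h2 : b⁻¹ * a ^ mt * b = (b⁻¹ * a * b) ^ mt := by
        rw [show b⁻¹ * a * b = cj b a from rfl, ← cj_zpow]; rfl
      rw [h2, hm, ← zpow_mul, hamm]
    rw [hside] at hQ2
    have := hQ2.inv_left
    rwa [inv_inv] at this
  -- `e = d⁻¹`
  have hedc : mn (f b) (g a) = (mn (f a) (g b))⁻¹ := by
    have h0 : mn (f b * f a) (g b * g a) = 1 := by
      rw [← map_mul, ← map_mul]; exact mn_eq_one_of_commute (hc (b * a))
    have h1 : mn (f b * f a) (g b * g a)
        = mn (f b * f a) (g a) * cj (g a) (mn (f b * f a) (g b)) := mn_mul_right _ _ _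
    have h2 : mn (f b * f a) (g a) = mn (f b) (g a) := by
      rw [mn_mul_left, mn_eq_one_of_commute (hc a), mul_one, cj_id_of_commute comm_e_fa]
    have h3 : mn (f b * f a) (g b) = mn (f a) (g b) := by
      rw [mn_mul_left, mn_eq_one_of_commute (hc b), cj_one, one_mul]
    rw [h1, h2, h3, cj_id_of_commute comm_d_ga] at h0
    exact eq_inv_of_mul_eq_one_left h0
  have comm_d_fa : Commute (mn (f a) (g b)) (f a) := by
    have h1 := comm_e_fa; rw [hedc] at h1
    have h2 := h1.inv_left; rwa [inv_inv] at h2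
  have comm_e_ga : Commute (mn (f b) (g a)) (g a) := by
    rw [hedc]; exact comm_d_ga.inv_left
  -- `mn ((f a)^i) (g b) = d ^ i`
  have hpow : ∀ i : ℤ, mn ((f a) ^ i) (g b) = (mn (f a) (g b)) ^ i := by
    intro i
    induction i using Int.induction_on with
    | zero => simp [mn_one_left]
    | succ i ih =>
      rw [zpow_add_one, mn_mul_left, ih, cj_id_of_commute (comm_d_fa.zpow_left (i : ℤ)),
        zpow_add_one]
    | pred i ih =>
      rw [zpow_sub_one, mn_mul_left, ih,
        cj_id_of_commute ((comm_d_fa.zpow_left (-i : ℤ)).inv_right),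
        mn_inv_left', cj_id_of_commute comm_d_fa.inv_left.inv_right, zpow_sub_one]
  -- `mn (f b) ((g a)^i) = e ^ i`
  have hpow_e : ∀ i : ℤ, mn (f b) ((g a) ^ i) = (mn (f b) (g a)) ^ i := by
    intro i
    induction i using Int.induction_on with
    | zero => simp [mn_one_right]
    | succ i ih =>
      rw [zpow_add_one, mn_mul_right, ih, cj_id_of_commute (comm_e_ga.zpow_left (i : ℤ)),
        show ((i : ℤ) + 1) = 1 + (i : ℤ) from add_comm _ _, zpow_one_add]
    | pred i ih =>
      rw [zpow_sub_one, mn_mul_right, ih,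
        cj_id_of_commute ((comm_e_ga.zpow_left (-i : ℤ)).inv_right),
        mn_inv_right', cj_id_of_commute comm_e_ga.inv_left.inv_right,
        show (-(i : ℤ) - 1) = (-1) + (-(i : ℤ)) by ring, zpow_add, zpow_neg_one]
  -- conjugation of d by (f b), (f b)⁻¹, (g b), (g b)⁻¹
  have hcj_fb_d : cj (f b) (mn (f a) (g b)) = (mn (f a) (g b)) ^ m := by
    have X : mn (f a * f b) (g b) = mn (f b * (f a) ^ m) (g b) := by
      rw [← map_zpow, ← map_mul, ← map_mul, hab]
    rw [mn_mul_left, mn_eq_one_of_commute (hc b), mul_one] at X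
    rw [mn_mul_left, mn_eq_one_of_commute (hc b), cj_one, one_mul, hpow m] at X
    exact X
  have hcj_fbi_d : cj (f b)⁻¹ (mn (f a) (g b)) = (mn (f a) (g b)) ^ mt := by
    have X : mn (f a * (f b)⁻¹) (g b) = mn ((f b)⁻¹ * (f a) ^ mt) (g b) := by
      rw [← map_zpow, ← map_inv, ← map_mul, ← map_mul, hab']
    rw [mn_mul_left, mn_inv_left', mn_eq_one_of_commute (hc b), inv_one, cj_one, mul_one] at X
    rw [mn_mul_left, mn_inv_left', mn_eq_one_of_commute (hc b), inv_one, cj_one, cj_one,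
      one_mul, hpow mt] at X
    exact X
  have hcj_gb_e : cj (g b) (mn (f b) (g a)) = (mn (f b) (g a)) ^ m := by
    have X : mn (f b) (g a * g b) = mn (f b) (g b * (g a) ^ m) := by
      rw [← map_zpow, ← map_mul, ← map_mul, hab]
    rw [mn_mul_right, mn_eq_one_of_commute (hc b), one_mul] at X
    rw [mn_mul_right, hpow_e m, mn_eq_one_of_commute (hc b), cj_one, mul_one] at X
    exact X
  have hcj_gbi_e : cj (g b)⁻¹ (mn (f b) (g a)) = (mn (f b) (g a)) ^ mt := by
    have X : mn (f b) (g a * (g b)⁻¹) = mn (f b) ((g b)⁻¹ * (g a) ^ mt) := by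
      rw [← map_zpow, ← map_inv, ← map_mul, ← map_mul, hab']
    rw [mn_mul_right, mn_inv_right', mn_eq_one_of_commute (hc b), inv_one, cj_one, one_mul] at X
    rw [mn_mul_right, hpow_e mt, mn_inv_right', mn_eq_one_of_commute (hc b), inv_one, cj_one,
      cj_one, mul_one] at X
    exact X
  have hcj_gb_d : cj (g b) (mn (f a) (g b)) = (mn (f a) (g b)) ^ m := by
    have := hcj_gb_e
    rw [hedc, cj_inv, inv_zpow] at this
    exact inv_injective this
  have hcj_gbi_d : cj (g b)⁻¹ (mn (f a) (g b)) = (mn (f a) (g b)) ^ mt := by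
    have := hcj_gbi_e
    rw [hedc, cj_inv, inv_zpow] at this
    exact inv_injective this
  -- d commutes with lmm a and with lmm b
  have comm_d_lma : Commute (mn (f a) (g b)) (lmm f g a) := by
    exact Commute.mul_right comm_d_fa.inv_right comm_d_ga
  have comm_d_lmb : Commute (mn (f a) (g b)) (lmm f g b) := by
    have h1 : f b * mn (f a) (g b) * (f b)⁻¹ = (mn (f a) (g b)) ^ mt := by
      have := hcj_fbi_d; unfold cj at this
      rw [inv_inv] at this; exact this
    have h2 : g b * mn (f a) (g b) * (g b)⁻¹ = (mn (f a) (g b)) ^ mt := by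
      have := hcj_gbi_d; unfold cj at this
      rw [inv_inv] at this; exact this
    show mn (f a) (g b) * lmm f g b = lmm f g b * mn (f a) (g b)
    unfold lmm
    calc mn (f a) (g b) * ((f b)⁻¹ * g b)
        = (f b)⁻¹ * (f b * mn (f a) (g b) * (f b)⁻¹) * g b := by group
    _ = (f b)⁻¹ * (mn (f a) (g b)) ^ mt * g b := by rw [h1]
    _ = (f b)⁻¹ * (g b * mn (f a) (g b) * (g b)⁻¹) * g b := by rw [h2]
    _ = (f b)⁻¹ * g b * mn (f a) (g b) := by group
  -- conjugates of d by powers of (f b) are powers of d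
  have hconj_bj : ∀ j : ℤ, ∃ t : ℤ, cj (f (b ^ j)) (mn (f a) (g b)) = (mn (f a) (g b)) ^ t := by
    intro j
    induction j using Int.induction_on with
    | zero => exact ⟨1, by rw [map_zpow, zpow_zero, cj_one_base, zpow_one]⟩
    | succ j ih =>
      obtain ⟨t, ht⟩ := ih
      refine ⟨t * m, ?_⟩
      rw [show ((j : ℤ) + 1) = (j + 1 : ℤ) from rfl, zpow_add_one, map_mul, ← cj_cj, ht,
        cj_zpow, hcj_fb_d, ← zpow_mul]
      ring_nf
    | pred j ih =>
      obtain ⟨t, ht⟩ := ih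
      refine ⟨t * mt, ?_⟩
      rw [zpow_sub_one, map_mul, map_inv, ← cj_cj, ht, cj_zpow, hcj_fbi_d, ← zpow_mul]
      ring_nf
  -- lmm of powers
  have comm_f_lm : ∀ x : H, Commute (f x) (lmm f g x) := by
    intro x
    exact Commute.mul_right (Commute.refl (f x)).inv_right (hc x)
  have lmm_zpow : ∀ (x : H) (i : ℤ), lmm f g (x ^ i) = (lmm f g x) ^ i := by
    intro x i
    induction i using Int.induction_on with
    | zero => rw [zpow_zero, zpow_zero, lmm_one]
    | succ i ih =>
      rw [zpow_add_one, lmm_cocycle, ih,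
        cj_id_of_commute ((comm_f_lm x).symm.zpow_left (i : ℤ)), zpow_add_one]
    | pred i ih =>
      rw [zpow_sub_one, lmm_cocycle, ih, lmm_inv, map_inv, ← cj_mul,
        cj_id_of_commute (Commute.mul_left
          (((comm_f_lm x).symm.zpow_left (-i : ℤ)).inv_right)
          ((comm_f_lm x).symm.inv_left.inv_right)), zpow_sub_one]
  -- d commutes with every lmm h
  have comm_d_lm : ∀ h : H, Commute (mn (f a) (g b)) (lmm f g h) := by
    intro h
    obtain ⟨i, j, hij⟩ := hdecomp h
    rw [hij, lmm_cocycle, lmm_zpow, lmm_zpow]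
    refine Commute.mul_right ?_ (comm_d_lmb.zpow_right j)
    obtain ⟨t, ht⟩ := hconj_bj (-j)
    have h1 : Commute ((mn (f a) (g b)) ^ t) ((lmm f g a) ^ i) :=
      (comm_d_lma.zpow_zpow t i)
    rw [← ht] at h1
    have h2 := commute_cj_of (f (b ^ j)) h1
    rwa [cj_cj, show f (b ^ (-j : ℤ)) * f (b ^ j) = 1 by
      rw [← map_mul, ← zpow_add, neg_add_cancel, zpow_zero, map_one], cj_one_base] at h2
  -- ===== the normal subgroup Mt and its centralizer =====
  have cj_mem_of_normal : ∀ {K : Subgroup G}, K.Normal → ∀ {x : G}, x ∈ K → ∀ u : G,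
      cj u x ∈ K := by
    intro K hK x hx u
    have := hK.conj_mem x hx u⁻¹
    simpa [cj] using this
  set SM : Set G := ((⇑f '' (N : Set H)) ∪ (⇑g '' (N : Set H))) ∪ Set.range (lmm f g)
    with hSM_def
  set Mt : Subgroup G := Subgroup.closure SM with hMt_def
  have hfN_mem : ∀ n ∈ N, f n ∈ Mt := fun n hn =>
    subset_closure (Or.inl (Or.inl ⟨n, hn, rfl⟩))
  have hgN_mem : ∀ n ∈ N, g n ∈ Mt := fun n hn =>
    subset_closure (Or.inl (Or.inr ⟨n, hn, rfl⟩))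
  have hlm_mem : ∀ h : H, lmm f g h ∈ Mt := fun h =>
    subset_closure (Or.inr ⟨h, rfl⟩)
  have hccc_mem : ∀ x y : H, ccc f g x y ∈ Mt := by
    intro x y
    rw [ccc_lm]
    exact mul_mem (mul_mem (hlm_mem x) (inv_mem (hlm_mem (y * x)))) (hlm_mem y)
  have hgk_eq : ∀ k : H, g k = f k * lmm f g k := by
    intro k; unfold lmm; group
  have key1 : ∀ x k : H, mn (f x) (g k) ∈ Mt := by
    intro x k
    rw [show mn (f x) (g k) = mn (f x) (f k * lmm f g k) by rw [← hgk_eq], mn_mul_right,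
      mn_map, cj_eq_mul_mn]
    refine mul_mem (hccc_mem x k) (mul_mem (hfN_mem _ (hcommN x k)) ?_)
    exact hccc_mem (mn x k) k
  have hcjf : ∀ (k : H) (x : G), x ∈ Mt → cj (f k) x ∈ Mt := by
    intro k x hx
    refine Subgroup.closure_induction (p := fun x _ => cj (f k) x ∈ Mt) ?_ ?_ ?_ ?_ hx
    · rintro s ((⟨n, hn, rfl⟩ | ⟨n, hn, rfl⟩) | ⟨h, rfl⟩)
      · have h1 : cj (f k) (f n) = f (k⁻¹ * n * k) := by
          unfold cj; rw [map_mul, map_mul, map_inv]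
        rw [h1]
        refine hfN_mem _ ?_
        have := hN.conj_mem n hn k⁻¹
        simpa using this
      · rw [cj_eq_mul_mn, mn_inv_pair]
        exact mul_mem (hgN_mem n hn) (inv_mem (key1 k n))
      · have h1 : cj (f k) (lmm f g h) = lmm f g (h * k) * (lmm f g k)⁻¹ := by
          rw [lmm_cocycle]; group
        rw [h1]
        exact mul_mem (hlm_mem _) (inv_mem (hlm_mem _))
    · show cj (f k) (1 : G) ∈ Mt
      rw [cj_one]; exact one_mem _
    · intro x y _ _ ihx ihy; rw [cj_mul]; exact mul_mem ihx ihy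
    · intro x _ ihx; rw [cj_inv]; exact inv_mem ihx
  have hcjg : ∀ (k : H) (x : G), x ∈ Mt → cj (g k) x ∈ Mt := by
    intro k x hx
    refine Subgroup.closure_induction (p := fun x _ => cj (g k) x ∈ Mt) ?_ ?_ ?_ ?_ hx
    · rintro s ((⟨n, hn, rfl⟩ | ⟨n, hn, rfl⟩) | ⟨h, rfl⟩)
      · rw [cj_eq_mul_mn]
        exact mul_mem (hfN_mem n hn) (key1 n k)
      · have h1 : cj (g k) (g n) = g (k⁻¹ * n * k) := by
          unfold cj; rw [map_mul, map_mul, map_inv]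
        rw [h1]
        refine hgN_mem _ ?_
        have := hN.conj_mem n hn k⁻¹
        simpa using this
      · rw [lmm_cj_g]
        exact mul_mem (inv_mem (hlm_mem _)) (hlm_mem _)
    · show cj (g k) (1 : G) ∈ Mt
      rw [cj_one]; exact one_mem _
    · intro x y _ _ ihx ihy; rw [cj_mul]; exact mul_mem ihx ihy
    · intro x _ ihx; rw [cj_inv]; exact inv_mem ihx
  have hcj_all : ∀ v : G, ∀ x ∈ Mt, cj v x ∈ Mt := by
    intro v
    have hv : v ∈ Subgroup.closure (Set.range ⇑f ∪ Set.range ⇑g) := by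
      rw [htop]; exact Subgroup.mem_top v
    refine Subgroup.closure_induction
      (p := fun v _ => (∀ x ∈ Mt, cj v x ∈ Mt) ∧ (∀ x ∈ Mt, cj v⁻¹ x ∈ Mt)) ?_ ?_ ?_ ?_ hv
      |>.1
    · rintro s (⟨k, rfl⟩ | ⟨k, rfl⟩)
      · exact ⟨fun x hx => hcjf k x hx, fun x hx => by rw [← map_inv]; exact hcjf k⁻¹ x hx⟩
      · exact ⟨fun x hx => hcjg k x hx, fun x hx => by rw [← map_inv]; exact hcjg k⁻¹ x hx⟩
    · constructor <;> intro x hx <;> simpa [cj_one_base] using hx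
    · intro u v _ _ ihu ihv
      constructor
      · intro x hx; rw [← cj_cj]; exact ihv.1 _ (ihu.1 x hx)
      · intro x hx; rw [mul_inv_rev, ← cj_cj]; exact ihu.2 _ (ihv.2 x hx)
    · intro u _ ihu
      exact ⟨ihu.2, fun x hx => by rw [inv_inv]; exact ihu.1 x hx⟩
  have Mt_norm : Mt.Normal := by
    constructor
    intro n hn u
    have h1 := hcj_all u⁻¹ n hn
    unfold cj at h1
    rwa [inv_inv] at h1
  set CMt : Subgroup G := Subgroup.centralizer (Mt : Set G) with hCMt_def
  have CMt_norm : CMt.Normal := by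
    constructor
    intro x hx u
    rw [Subgroup.mem_centralizer_iff]
    intro s hs
    have hs' : u⁻¹ * s * u ∈ Mt := by
      have := Mt_norm.conj_mem s hs u⁻¹
      simpa using this
    have hxc := Subgroup.mem_centralizer_iff.mp hx _ hs'
    calc s * (u * x * u⁻¹) = u * ((u⁻¹ * s * u) * x) * u⁻¹ := by group
    _ = u * (x * (u⁻¹ * s * u)) * u⁻¹ := by rw [hxc]
    _ = (u * x * u⁻¹) * s := by group
  have hCM_comm : ∀ c ∈ CMt, ∀ s ∈ Mt, Commute c s := by
    intro c hcm s hs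
    exact (Subgroup.mem_centralizer_iff.mp hcm s hs).symm
  have d_in_CMt : mn (f a) (g b) ∈ CMt := by
    rw [Subgroup.mem_centralizer_iff]
    intro s hs
    refine Subgroup.closure_induction
      (p := fun s _ => s * mn (f a) (g b) = mn (f a) (g b) * s) ?_ ?_ ?_ ?_ hs
    · rintro s ((⟨n, hn, rfl⟩ | ⟨n, hn, rfl⟩) | ⟨h, rfl⟩)
      · obtain ⟨i, hi⟩ := hNa n hn
        subst hi
        rw [map_zpow]
        exact ((comm_d_fa.zpow_right i).symm).eq
      · obtain ⟨i, hi⟩ := hNa n hn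
        subst hi
        rw [map_zpow]
        exact ((comm_d_ga.zpow_right i).symm).eq
      · exact ((comm_d_lm h).symm).eq
    · simp
    · intro s t _ _ ihs iht
      calc s * t * mn (f a) (g b) = s * (t * mn (f a) (g b)) := by group
      _ = s * (mn (f a) (g b) * t) := by rw [iht]
      _ = (s * mn (f a) (g b)) * t := by group
      _ = (mn (f a) (g b) * s) * t := by rw [ihs]
      _ = mn (f a) (g b) * (s * t) := by group
    · intro s _ ihs
      have : Commute s (mn (f a) (g b)) := ihs
      exact this.inv_left.eq
  have DMa : ∀ k : H, mn (f a) (g k) ∈ CMt ∧ mn (f b) (g k) ∈ CMt := by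
    intro k
    refine Subgroup.closure_induction
      (p := fun k _ => mn (f a) (g k) ∈ CMt ∧ mn (f b) (g k) ∈ CMt) ?_ ?_ ?_ ?_ (Hgen k)
    · rintro s hs
      have hs' : s = a ∨ s = b := by simpa [Set.mem_insert_iff] using hs
      rcases hs' with h | h <;> rw [h]
      · refine ⟨?_, ?_⟩
        · rw [mn_eq_one_of_commute (hc a)]; exact one_mem _
        · rw [hedc]; exact inv_mem d_in_CMt
      · exact ⟨d_in_CMt, by rw [mn_eq_one_of_commute (hc b)]; exact one_mem _⟩
    · show mn (f a) (g 1) ∈ CMt ∧ mn (f b) (g 1) ∈ CMt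
      rw [map_one, mn_one_right, mn_one_right]; exact ⟨one_mem _, one_mem _⟩
    · intro k₁ k₂ _ _ ih₁ ih₂
      rw [map_mul, mn_mul_right, mn_mul_right]
      exact ⟨mul_mem ih₂.1 (cj_mem_of_normal CMt_norm ih₁.1 _),
        mul_mem ih₂.2 (cj_mem_of_normal CMt_norm ih₁.2 _)⟩
    · intro k _ ih
      rw [map_inv, mn_inv_right', mn_inv_right']
      exact ⟨cj_mem_of_normal CMt_norm (inv_mem ih.1) _,
        cj_mem_of_normal CMt_norm (inv_mem ih.2) _⟩
  have DM : ∀ x k : H, mn (f x) (g k) ∈ CMt := by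
    intro x
    refine Subgroup.closure_induction
      (p := fun x _ => ∀ k : H, mn (f x) (g k) ∈ CMt) ?_ ?_ ?_ ?_ (Hgen x)
    · rintro s hs k
      have hs' : s = a ∨ s = b := by simpa [Set.mem_insert_iff] using hs
      rcases hs' with h | h <;> rw [h]
      · exact (DMa k).1
      · exact (DMa k).2
    · intro k; rw [map_one, mn_one_left]; exact one_mem _
    · intro x₁ x₂ _ _ ih₁ ih₂ k
      rw [map_mul, mn_mul_left]
      exact mul_mem (cj_mem_of_normal CMt_norm (ih₁ k) _) (ih₂ k)
    · intro x _ ih k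
      rw [map_inv, mn_inv_left']
      exact cj_mem_of_normal CMt_norm (inv_mem (ih k)) _
  -- ===== the centralizer of the psi-side and the key elements u, v =====
  set Cpsi : Subgroup G := Subgroup.centralizer (Set.range ⇑g) with hCpsi_def
  have stab_g : ∀ (k : H) (z : G), z ∈ Cpsi → cj (g k) z ∈ Cpsi := by
    intro k z hz
    rw [Subgroup.mem_centralizer_iff]
    rintro s ⟨w, rfl⟩
    have h1 : g w = cj (g k) (g (k * w * k⁻¹)) := by
      unfold cj; rw [map_mul, map_mul, map_inv]; group
    have h2 : z * g (k * w * k⁻¹) = g (k * w * k⁻¹) * z :=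
      (Subgroup.mem_centralizer_iff.mp hz _ ⟨_, rfl⟩).symm
    calc g w * cj (g k) z = cj (g k) (g (k * w * k⁻¹) * z) := by rw [h1, ← cj_mul]
    _ = cj (g k) (z * g (k * w * k⁻¹)) := by rw [h2]
    _ = cj (g k) z * g w := by rw [cj_mul, ← h1]
  have stab_f : ∀ (k : H) (z : G), z ∈ Cpsi → z ∈ Mt → cj (f k) z ∈ Cpsi := by
    intro k z hzC hzM
    rw [Subgroup.mem_centralizer_iff]
    rintro s ⟨w, rfl⟩
    have h1 : cj (f k⁻¹) (g w) = g w * (mn (f k⁻¹) (g w))⁻¹ := by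
      rw [cj_eq_mul_mn, mn_inv_pair]
    have hcomm1 : Commute z (g w) :=
      (Subgroup.mem_centralizer_iff.mp hzC _ ⟨w, rfl⟩).symm
    have hcomm2 : Commute z ((mn (f k⁻¹) (g w))⁻¹) :=
      ((hCM_comm _ (DM k⁻¹ w) z hzM).symm).inv_right
    have hcomm3 : Commute z (cj (f k⁻¹) (g w)) := by
      rw [h1]; exact hcomm1.mul_right hcomm2
    have h4 : Commute (cj (f k) z) (cj (f k) (cj (f k⁻¹) (g w))) := commute_cj_of _ hcomm3
    rw [cj_cj, map_inv, inv_mul_cancel, cj_one_base] at h4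
    exact h4.symm.eq
  -- the element u = ccc b a
  have hau : mn b a⁻¹ = a ^ (m - 1) := by
    have h1 : mn b a⁻¹ = (b⁻¹ * a * b) * a⁻¹ := by unfold mn; group
    rw [h1, hm, ← zpow_sub_one]
  have hu_eq : ccc f g b a = (mn (f a) (g b))⁻¹ * (f a) ^ (m - 1) := by
    show mn (f b) (lmm f g a) = _
    rw [show lmm f g a = (f a)⁻¹ * g a from rfl, mn_mul_right,
      show (f a)⁻¹ = f a⁻¹ by rw [map_inv], mn_map, hau, map_zpow,
      cj_id_of_commute ((hc a).zpow_left (m - 1)), hedc]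
  have comm_u_ga : Commute (ccc f g b a) (g a) := by
    rw [hu_eq]
    exact Commute.mul_left comm_d_ga.inv_left ((hc a).zpow_left (m - 1))
  have comm_u_gb : Commute (ccc f g b a) (g b) := by
    apply commute_of_cj_id
    rw [hu_eq, cj_mul, cj_inv, hcj_gb_d, cj_zpow, cj_eq_mul_mn, (comm_d_fa.symm).mul_zpow]
    calc (mn (f a) (g b) ^ m)⁻¹ * ((f a) ^ (m - 1) * mn (f a) (g b) ^ (m - 1))
        = ((mn (f a) (g b) ^ m)⁻¹ * (f a) ^ (m - 1)) * mn (f a) (g b) ^ (m - 1) := by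
          rw [mul_assoc]
    _ = ((f a) ^ (m - 1) * (mn (f a) (g b) ^ m)⁻¹) * mn (f a) (g b) ^ (m - 1) := by
          rw [((comm_d_fa.zpow_zpow m (m - 1)).inv_left).eq]
    _ = (f a) ^ (m - 1) * ((mn (f a) (g b) ^ m)⁻¹ * mn (f a) (g b) ^ (m - 1)) := by
          rw [mul_assoc]
    _ = (f a) ^ (m - 1) * (mn (f a) (g b))⁻¹ := by
          rw [← zpow_neg, ← zpow_add, show -m + (m - 1) = -1 by ring, zpow_neg_one]
    _ = (mn (f a) (g b))⁻¹ * (f a) ^ (m - 1) := by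
          rw [((comm_d_fa.symm.zpow_left (m - 1)).inv_right).eq]
  have comm_u_all : ∀ w : H, Commute (ccc f g b a) (g w) := by
    intro w
    refine Subgroup.closure_induction
      (p := fun w _ => Commute (ccc f g b a) (g w)) ?_ ?_ ?_ ?_ (Hgen w)
    · rintro s hs
      have hs' : s = a ∨ s = b := by simpa [Set.mem_insert_iff] using hs
      rcases hs' with h | h <;> rw [h]
      · exact comm_u_ga
      · exact comm_u_gb
    · show Commute (ccc f g b a) (g 1)
      rw [map_one]; exact Commute.one_right _
    · intro w₁ w₂ _ _ ih₁ ih₂; rw [map_mul]; exact ih₁.mul_right ih₂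
    · intro w _ ih; rw [map_inv]; exact ih.inv_right
  have u_mem : ccc f g b a ∈ Cpsi := by
    rw [Subgroup.mem_centralizer_iff]
    rintro s ⟨w, rfl⟩
    exact ((comm_u_all w).symm).eq
  -- the element v = ccc a b
  have hav : mn a b⁻¹ = a ^ (mt - 1) := by
    have h1 : mn a b⁻¹ = a⁻¹ * (b * a * b⁻¹) := by unfold mn; group
    rw [h1, hmt, ← zpow_neg_one, ← zpow_add, show (-1) + mt = mt - 1 by ring]
  have hv_eq : ccc f g a b
      = mn (f a) (g b) * ((f a) ^ (mt - 1) * mn (f a) (g b) ^ (mt - 1)) := by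
    show mn (f a) (lmm f g b) = _
    rw [show lmm f g b = (f b)⁻¹ * g b from rfl, mn_mul_right,
      show (f b)⁻¹ = f b⁻¹ by rw [map_inv], mn_map, hav, map_zpow, cj_zpow,
      cj_eq_mul_mn, (comm_d_fa.symm).mul_zpow]
  have comm_v_ga : Commute (ccc f g a b) (g a) := by
    rw [hv_eq]
    exact Commute.mul_left comm_d_ga
      (Commute.mul_left ((hc a).zpow_left (mt - 1)) (comm_d_ga.zpow_left (mt - 1)))
  have hd_mm : mn (f a) (g b) ^ (m * mt) = mn (f a) (g b) := by
    have h1 := hpow (m * mt)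
    rw [← map_zpow, hamm] at h1
    exact h1.symm
  have comm_v_gb : Commute (ccc f g a b) (g b) := by
    apply commute_of_cj_id
    rw [hv_eq, cj_mul, cj_mul, hcj_gb_d, cj_zpow, cj_zpow, hcj_gb_d, cj_eq_mul_mn,
      (comm_d_fa.symm).mul_zpow, ← zpow_mul]
    calc mn (f a) (g b) ^ m
          * (f a ^ (mt - 1) * mn (f a) (g b) ^ (mt - 1) * mn (f a) (g b) ^ (m * (mt - 1)))
        = mn (f a) (g b) ^ m * f a ^ (mt - 1)
          * (mn (f a) (g b) ^ (mt - 1) * mn (f a) (g b) ^ (m * (mt - 1))) := by group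
    _ = f a ^ (mt - 1) * mn (f a) (g b) ^ m
          * (mn (f a) (g b) ^ (mt - 1) * mn (f a) (g b) ^ (m * (mt - 1))) := by
        rw [(comm_d_fa.zpow_zpow m (mt - 1)).eq]
    _ = f a ^ (mt - 1) * mn (f a) (g b) ^ (m + ((mt - 1) + m * (mt - 1))) := by
        rw [zpow_add, zpow_add]; group
    _ = f a ^ (mt - 1) * (mn (f a) (g b) ^ (mt - 1) * mn (f a) (g b) ^ (m * mt)) := by
        rw [← zpow_add, show (mt - 1) + m * mt = m + ((mt - 1) + m * (mt - 1)) by ring]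
    _ = f a ^ (mt - 1) * (mn (f a) (g b) ^ (mt - 1) * mn (f a) (g b)) := by rw [hd_mm]
    _ = mn (f a) (g b) * (f a ^ (mt - 1) * mn (f a) (g b) ^ (mt - 1)) := by
        conv_lhs => rw [← mul_assoc]
        exact (Commute.mul_left ((comm_d_fa.zpow_right (mt - 1)).symm)
          (Commute.zpow_self (mn (f a) (g b)) (mt - 1))).eq
  have comm_v_all : ∀ w : H, Commute (ccc f g a b) (g w) := by
    intro w
    refine Subgroup.closure_induction
      (p := fun w _ => Commute (ccc f g a b) (g w)) ?_ ?_ ?_ ?_ (Hgen w)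
    · rintro s hs
      have hs' : s = a ∨ s = b := by simpa [Set.mem_insert_iff] using hs
      rcases hs' with h | h <;> rw [h]
      · exact comm_v_ga
      · exact comm_v_gb
    · show Commute (ccc f g a b) (g 1)
      rw [map_one]; exact Commute.one_right _
    · intro w₁ w₂ _ _ ih₁ ih₂; rw [map_mul]; exact ih₁.mul_right ih₂
    · intro w _ ih; rw [map_inv]; exact ih.inv_right
  have v_mem : ccc f g a b ∈ Cpsi := by
    rw [Subgroup.mem_centralizer_iff]
    rintro s ⟨w, rfl⟩
    exact ((comm_v_all w).symm).eq
  -- ===== all ccc elements centralize the psi side =====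
  have F1from : ∀ y : H, ccc f g a y ∈ Cpsi → ccc f g b y ∈ Cpsi →
      ∀ x : H, ccc f g x y ∈ Cpsi := by
    intro y hya hyb x
    refine Subgroup.closure_induction
      (p := fun x _ => ccc f g x y ∈ Cpsi) ?_ ?_ ?_ ?_ (Hgen x)
    · rintro s hs
      have hs' : s = a ∨ s = b := by simpa [Set.mem_insert_iff] using hs
      rcases hs' with h | h <;> rw [h]
      · exact hya
      · exact hyb
    · show ccc f g 1 y ∈ Cpsi
      rw [ccc_one_left]; exact one_mem _
    · intro x₁ x₂ _ _ ih₁ ih₂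
      rw [ccc_mul_left]
      exact mul_mem (stab_f x₂ _ ih₁ (hccc_mem _ _)) ih₂
    · intro x _ ih
      rw [ccc_inv_left]
      exact stab_f x⁻¹ _ (inv_mem ih) (inv_mem (hccc_mem _ _))
  have F1 : ∀ y x : H, ccc f g x y ∈ Cpsi := by
    intro y
    refine Subgroup.closure_induction
      (p := fun y _ => ∀ x : H, ccc f g x y ∈ Cpsi) ?_ ?_ ?_ ?_ (Hgen y)
    · rintro s hs
      have hs' : s = a ∨ s = b := by simpa [Set.mem_insert_iff] using hs
      rcases hs' with h | h <;> rw [h]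
      · refine F1from a ?_ u_mem
        have h1 : ccc f g a a = 1 := mn_eq_one_of_commute (comm_f_lm a)
        rw [h1]; exact one_mem _
      · refine F1from b v_mem ?_
        have h1 : ccc f g b b = 1 := mn_eq_one_of_commute (comm_f_lm b)
        rw [h1]; exact one_mem _
    · intro x
      show ccc f g x 1 ∈ Cpsi
      rw [ccc_one_right]; exact one_mem _
    · intro y₁ y₂ _ _ ih₁ ih₂ x
      rw [ccc_expand_right]
      exact mul_mem (ih₂ x) (stab_g y₂ _ (ih₁ _))
    · intro y _ ih x
      rw [ccc_inv_right]
      exact stab_g y⁻¹ _ (inv_mem (ih _))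
  -- ===== the subgroup K₀ generated by the ccc elements =====
  set K0 : Subgroup G := Subgroup.closure {x : G | ∃ p q : H, x = ccc f g p q} with hK0_def
  have K0_le : K0 ≤ Cpsi := by
    rw [Subgroup.closure_le]
    rintro s ⟨p, q, rfl⟩
    exact F1 q p
  have hK0cj : ∀ (k : H) (x : G), x ∈ K0 → cj (f k) x ∈ K0 ∧ cj (g k) x ∈ K0 := by
    intro k x hx
    refine Subgroup.closure_induction
      (p := fun x _ => cj (f k) x ∈ K0 ∧ cj (g k) x ∈ K0) ?_ ?_ ?_ ?_ hx
    · rintro s ⟨p, q, rfl⟩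
      constructor
      · rw [conj_ccc_f]
        exact mul_mem (subset_closure ⟨_, _, rfl⟩) (inv_mem (subset_closure ⟨_, _, rfl⟩))
      · rw [conj_ccc_g]
        exact mul_mem (inv_mem (subset_closure ⟨_, _, rfl⟩)) (subset_closure ⟨_, _, rfl⟩)
    · show cj (f k) (1 : G) ∈ K0 ∧ cj (g k) (1 : G) ∈ K0
      constructor <;> (rw [cj_one]; exact one_mem _)
    · intro x y _ _ ihx ihy
      exact ⟨by rw [cj_mul]; exact mul_mem ihx.1 ihy.1,
        by rw [cj_mul]; exact mul_mem ihx.2 ihy.2⟩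
    · intro x _ ihx
      exact ⟨by rw [cj_inv]; exact inv_mem ihx.1,
        by rw [cj_inv]; exact inv_mem ihx.2⟩
  have K0_cj_all : ∀ v : G, ∀ x ∈ K0, cj v x ∈ K0 := by
    intro v
    have hv : v ∈ Subgroup.closure (Set.range ⇑f ∪ Set.range ⇑g) := by
      rw [htop]; exact Subgroup.mem_top v
    refine Subgroup.closure_induction
      (p := fun v _ => (∀ x ∈ K0, cj v x ∈ K0) ∧ (∀ x ∈ K0, cj v⁻¹ x ∈ K0)) ?_ ?_ ?_ ?_ hv
      |>.1
    · rintro s (⟨k, rfl⟩ | ⟨k, rfl⟩)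
      · exact ⟨fun x hx => (hK0cj k x hx).1,
          fun x hx => by rw [← map_inv]; exact (hK0cj k⁻¹ x hx).1⟩
      · exact ⟨fun x hx => (hK0cj k x hx).2,
          fun x hx => by rw [← map_inv]; exact (hK0cj k⁻¹ x hx).2⟩
    · constructor <;> intro x hx <;> simpa [cj_one_base] using hx
    · intro u v _ _ ihu ihv
      constructor
      · intro x hx; rw [← cj_cj]; exact ihv.1 _ (ihu.1 x hx)
      · intro x hx; rw [mul_inv_rev, ← cj_cj]; exact ihu.2 _ (ihv.2 x hx)
    · intro u _ ihu
      exact ⟨ihu.2, fun x hx => by rw [inv_inv]; exact ihu.1 x hx⟩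
  have K0_norm : K0.Normal := by
    constructor
    intro n hn u
    have h1 := K0_cj_all u⁻¹ n hn
    unfold cj at h1
    rwa [inv_inv] at h1
  -- ===== conclusion =====
  have K_le_K0 : ⁅f.range, Subgroup.closure {x | ∃ h : H, x = (f h)⁻¹ * g h}⁆ ≤ K0 := by
    rw [Subgroup.commutator_le]
    rintro g₁ ⟨p, rfl⟩ g₂ hg₂
    have key : ∀ y ∈ Subgroup.closure {x | ∃ h : H, x = (f h)⁻¹ * g h},
        ∀ p : H, ⁅f p, y⁆ ∈ K0 := by
      intro y hy
      refine Subgroup.closure_induction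
        (p := fun y _ => ∀ p : H, ⁅f p, y⁆ ∈ K0) ?_ ?_ ?_ ?_ hy
      · rintro s ⟨h, rfl⟩ p
        have h1 : ⁅f p, (f h)⁻¹ * g h⁆
            = cj (f p⁻¹) (lmm f g h * ccc f g p h * (lmm f g h)⁻¹) := by
          show ⁅f p, lmm f g h⁆ = _
          rw [commutatorElement_def]
          show _ = cj (f p⁻¹) (lmm f g h * mn (f p) (lmm f g h) * (lmm f g h)⁻¹)
          unfold cj mn
          rw [map_inv]
          group
        rw [h1]
        refine K0_cj_all _ _ ?_
        have h2 : ccc f g p h ∈ K0 := subset_closure ⟨_, _, rfl⟩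
        have h3 := K0_norm.conj_mem _ h2 (lmm f g h)
        exact h3
      · intro p
        show ⁅f p, (1 : G)⁆ ∈ K0
        rw [commutatorElement_one_right]; exact one_mem _
      · intro y₁ y₂ _ _ ih₁ ih₂ p
        have h1 : ⁅f p, y₁ * y₂⁆ = ⁅f p, y₁⁆ * (y₁ * ⁅f p, y₂⁆ * y₁⁻¹) := by
          simp only [commutatorElement_def]; group
        rw [h1]
        exact mul_mem (ih₁ p) (K0_norm.conj_mem _ (ih₂ p) y₁)
      · intro y _ ih p
        have h1 : ⁅f p, y⁻¹⁆ = y⁻¹ * ⁅f p, y⁆⁻¹ * y := by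
          simp only [commutatorElement_def]; group
        rw [h1, show y⁻¹ * ⁅f p, y⁆⁻¹ * y = y⁻¹ * ⁅f p, y⁆⁻¹ * (y⁻¹)⁻¹ by rw [inv_inv]]
        exact K0_norm.conj_mem _ (inv_mem (ih p)) y⁻¹
    exact key g₂ hg₂ p
  rw [eq_bot_iff, Subgroup.commutator_le]
  rintro g₁ hg₁ g₂ ⟨w, rfl⟩
  have hg₁C : g₁ ∈ Cpsi := K0_le (K_le_K0 hg₁)
  have hcomm : g w * g₁ = g₁ * g w :=
    Subgroup.mem_centralizer_iff.mp hg₁C (g w) ⟨w, rfl⟩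
  rw [Subgroup.mem_bot, commutatorElement_eq_one_iff_commute]
  exact hcomm.symm







theorem chi_comm (H : Type*) [Group H] : ∀ h : H, Commute (chiIota H h) (chiPsi H h) := by
  intro h
  rw [← commutatorElement_eq_one_iff_commute]
  have h1 : (⁅chiIota H h, chiPsi H h⁆ : chi H)
      = QuotientGroup.mk' (Subgroup.normalClosure (chiRel H))
        ⁅(Monoid.Coprod.inl h : Monoid.Coprod H H), Monoid.Coprod.inr h⁆ := by
    rw [map_commutatorElement]; rfl
  rw [h1]
  have h2 : (⁅(Monoid.Coprod.inl h : Monoid.Coprod H H), Monoid.Coprod.inr h⁆)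
      ∈ Subgroup.normalClosure (chiRel H) :=
    Subgroup.subset_normalClosure ⟨h, rfl⟩
  exact (QuotientGroup.eq_one_iff _).mpr h2

theorem chi_top (H : Type*) [Group H] :
    Subgroup.closure (Set.range ⇑(chiIota H) ∪ Set.range ⇑(chiPsi H)) = ⊤ := by
  rw [eq_top_iff]
  rintro x -
  obtain ⟨y, rfl⟩ := QuotientGroup.mk'_surjective (Subgroup.normalClosure (chiRel H)) x
  induction y using Monoid.Coprod.induction_on with
  | inl m => exact Subgroup.subset_closure (Or.inl ⟨m, rfl⟩)
  | inr n => exact Subgroup.subset_closure (Or.inr ⟨n, rfl⟩)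
  | mul x y hx hy => rw [map_mul]; exact mul_mem hx hy

end Chi19

/-- If H is metacyclic (it has a cyclic normal subgroup with cyclic quotient),
then R(H) is trivial. -/
theorem stmt_19 (H : Type*) [Group H] (N : Subgroup H) (hN : N.Normal)
    (hcyc : IsCyclic ↥N) (hquot : IsCyclic (H ⧸ N)) :
    Rsub H = ⊥ := by
  exact Chi19.abs_main (chiIota H) (chiPsi H) (Chi19.chi_comm H) (Chi19.chi_top H) N hN hcyc hquot
end
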